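/- arXiv:2006.09678 — 9 statements merged into one kernel-verified Lean document; each statement's English description precedes it below -/
import Mathlib

section
/- Let θ, φ : [0,2π] → ℝ be continuous. Then ∫₀^{2π} exp(i(θ(t) + λ·φ(t))) dt = 0 for all real λ if and only if ∫₀^{2π} exp(iθ(t)) · φ(t)ⁿ dt = 0 for all natural numbers n ≥ 0. -/
open Real MeasureTheory intervalIntegral

lemma key_lemma (θ φ : ℝ → ℝ)
    (hθ : ContinuousOn θ (Set.Icc 0 (2 * π)))
    (hφ : ContinuousOn φ (Set.Icc 0 (2 * π))) (l : ℝ) :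
    HasSum (fun n : ℕ => (Complex.I * l) ^ n / (Nat.factorial n : ℂ) *
        ∫ t in (0:ℝ)..(2 * π), Complex.exp (Complex.I * (θ t : ℂ)) * (φ t : ℂ) ^ n)
      (∫ t in (0:ℝ)..(2 * π),
        Complex.exp (Complex.I * ((θ t : ℂ) + (l : ℂ) * (φ t : ℂ)))) := by
  have hpi : (0:ℝ) ≤ 2 * π := by positivity
  obtain ⟨M, hM⟩ := isCompact_Icc.exists_bound_of_continuousOn hφ
  have hM0 : (0:ℝ) ≤ M := le_trans (norm_nonneg _) (hM 0 ⟨le_refl _, hpi⟩)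
  set F : ℕ → ℝ → ℂ := fun n t =>
    Complex.exp (Complex.I * (θ t : ℂ)) * ((Complex.I * l * φ t) ^ n / (Nat.factorial n : ℂ)) with hF
  have hcont : ∀ n, ContinuousOn (F n) (Set.Icc 0 (2 * π)) := by
    intro n
    have h1 : ContinuousOn (fun t => (θ t : ℂ)) (Set.Icc 0 (2*π)) :=
      Complex.continuous_ofReal.comp_continuousOn hθ
    have h2 : ContinuousOn (fun t => (φ t : ℂ)) (Set.Icc 0 (2*π)) :=
      Complex.continuous_ofReal.comp_continuousOn hφ
    exact (Complex.continuous_exp.comp_continuousOn (h1.const_smul Complex.I)).mul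
      (((continuousOn_const.mul h2).pow n).div_const _)
  have hintg : ∀ n, IntegrableOn (F n) (Set.Ioc 0 (2*π)) volume := fun n =>
    ((hcont n).integrableOn_compact isCompact_Icc).mono_set Set.Ioc_subset_Icc_self
  have hnorm : ∀ (n : ℕ) (t : ℝ), ‖F n t‖ = (|l| * |φ t|) ^ n / (Nat.factorial n : ℝ) := by
    intro n t
    simp only [hF, norm_mul, norm_div, norm_pow]
    rw [mul_comm Complex.I ((θ t : ℂ))]
    simp [Complex.norm_exp_ofReal_mul_I, map_mul, Complex.norm_I,
      Complex.norm_real, abs_mul]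
  have hbnd : ∀ n, (∫ t in Set.Ioc (0:ℝ) (2*π), ‖F n t‖) ≤
      (2*π) * ((|l| * M) ^ n / (Nat.factorial n : ℝ)) := by
    intro n
    have h1 : ∀ t ∈ Set.Ioc (0:ℝ) (2*π), ‖F n t‖ ≤ (|l| * M) ^ n / (Nat.factorial n : ℝ) := by
      intro t ht
      rw [hnorm]
      apply div_le_div_of_nonneg_right ?_ ?_ |>.trans_eq rfl
      · exact pow_le_pow_left₀ (by positivity)
          (mul_le_mul_of_nonneg_left (hM t (Set.Ioc_subset_Icc_self ht)) (abs_nonneg l)) n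
      · positivity
    calc (∫ t in Set.Ioc (0:ℝ) (2*π), ‖F n t‖)
        ≤ ∫ _ in Set.Ioc (0:ℝ) (2*π), (|l| * M) ^ n / (Nat.factorial n : ℝ) := by
          apply setIntegral_mono_on (hintg n).norm (integrableOn_const (by
            rw [Real.volume_Ioc]; exact ENNReal.ofReal_ne_top)) measurableSet_Ioc h1
      _ = (2*π) * ((|l| * M) ^ n / (Nat.factorial n : ℝ)) := by
          rw [setIntegral_const, measureReal_def, Real.volume_Ioc, smul_eq_mul]
          congr 1
          rw [ENNReal.toReal_ofReal (by linarith)]; ring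
  have hsum : Summable fun n => ∫ t in Set.Ioc (0:ℝ) (2*π), ‖F n t‖ := by
    apply Summable.of_nonneg_of_le (fun n => integral_nonneg fun t => norm_nonneg _)
      (fun n => hbnd n)
    exact (Real.summable_pow_div_factorial (|l| * M)).mul_left _
  have main := MeasureTheory.hasSum_integral_of_summable_integral_norm
    (μ := volume.restrict (Set.Ioc 0 (2*π))) hintg hsum
  have hts : ∀ t : ℝ, ∑' n : ℕ, F n t =
      Complex.exp (Complex.I * ((θ t : ℂ) + (l:ℂ) * φ t)) := by
    intro t
    simp only [hF]
    rw [tsum_mul_left]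
    have h2 : ∑' n : ℕ, (Complex.I * l * φ t) ^ n / (Nat.factorial n : ℂ)
        = Complex.exp (Complex.I * l * φ t) := by
      rw [Complex.exp_eq_exp_ℂ, NormedSpace.exp_eq_tsum_div]
    rw [h2, ← Complex.exp_add]
    congr 1
    ring
  have ha : ∀ n : ℕ, (∫ t in Set.Ioc (0:ℝ) (2*π), F n t) =
      (Complex.I * l) ^ n / (Nat.factorial n : ℂ) *
        ∫ t in (0:ℝ)..(2 * π), Complex.exp (Complex.I * (θ t : ℂ)) * (φ t : ℂ) ^ n := by
    intro n
    rw [intervalIntegral.integral_of_le hpi, ← MeasureTheory.integral_const_mul]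
    congr 1 with t
    simp only [hF, mul_pow]
    ring
  rw [intervalIntegral.integral_of_le hpi]
  have heq : (∫ t in Set.Ioc (0:ℝ) (2*π), ∑' n, F n t) =
      ∫ t in Set.Ioc (0:ℝ) (2*π),
        Complex.exp (Complex.I * ((θ t : ℂ) + (l:ℂ) * φ t)) := by
    apply setIntegral_congr_fun measurableSet_Ioc (fun t _ => hts t)
  rw [← heq]
  simpa only [ha] using main

theorem stmt_1 (θ φ : ℝ → ℝ)
    (hθ : ContinuousOn θ (Set.Icc 0 (2 * π)))
    (hφ : ContinuousOn φ (Set.Icc 0 (2 * π))) :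
    (∀ l : ℝ, ∫ t in (0:ℝ)..(2 * π),
        Complex.exp (Complex.I * ((θ t : ℂ) + (l : ℂ) * (φ t : ℂ))) = 0) ↔
    (∀ n : ℕ, ∫ t in (0:ℝ)..(2 * π),
        Complex.exp (Complex.I * (θ t : ℂ)) * (φ t : ℂ) ^ n = 0) := by
  have hpi : (0:ℝ) ≤ 2 * π := by positivity
  set a : ℕ → ℂ := fun n => ∫ t in (0:ℝ)..(2 * π),
      Complex.exp (Complex.I * (θ t : ℂ)) * (φ t : ℂ) ^ n with ha
  constructor
  · intro h n
    set c : ℕ → ℂ := fun n => Complex.I ^ n / (Nat.factorial n : ℂ) * a n with hc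
    have hkey : ∀ l : ℝ, HasSum (fun n : ℕ => c n * (l:ℂ) ^ n) 0 := by
      intro l
      have := key_lemma θ φ hθ hφ l
      rw [h l] at this
      convert this using 2 with m
      simp only [hc, mul_pow]
      ring
    have hsc : Summable fun n : ℕ => ‖c n‖ := by
      obtain ⟨M, hM⟩ := isCompact_Icc.exists_bound_of_continuousOn hφ
      have hM0 : (0:ℝ) ≤ M := le_trans (norm_nonneg _) (hM 0 ⟨le_refl _, hpi⟩)
      apply Summable.of_nonneg_of_le (fun n => norm_nonneg _) (fun m => ?_)
        ((Real.summable_pow_div_factorial M).mul_left (2*π))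
      have hb : ‖a m‖ ≤ M ^ m * |2 * π - 0| := by
        apply intervalIntegral.norm_integral_le_of_norm_le_const
        intro t ht
        rw [Set.uIoc_of_le hpi] at ht
        rw [norm_mul, norm_pow, mul_comm Complex.I]
        simp only [Complex.norm_exp_ofReal_mul_I, one_mul,
          Complex.norm_real]
        exact pow_le_pow_left₀ (abs_nonneg _) (hM t (Set.Ioc_subset_Icc_self ht)) m
      have hcn : ‖c m‖ = ‖a m‖ / (Nat.factorial m : ℝ) := by
        simp only [hc, norm_mul, norm_div, norm_pow, Complex.norm_I,
          one_pow, Complex.norm_natCast]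
        ring
      rw [hcn]
      rw [abs_of_nonneg (by linarith)] at hb
      calc ‖a m‖ / (Nat.factorial m : ℝ) ≤ (M ^ m * (2 * π - 0)) / (Nat.factorial m : ℝ) := by
            apply div_le_div_of_nonneg_right hb ?_ |>.trans_eq rfl
            exact_mod_cast (Nat.factorial_pos m).le
        _ = 2 * π * (M ^ m / (Nat.factorial m : ℝ)) := by ring
    set p : FormalMultilinearSeries ℝ ℝ ℂ :=
      fun n => ContinuousMultilinearMap.mkPiRing ℝ (Fin n) (c n) with hp
    have hrad : (1 : ENNReal) ≤ p.radius := by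
      apply p.le_radius_of_summable
      simpa [hp, ContinuousMultilinearMap.norm_mkPiRing] using hsc
    have hball : HasFPowerSeriesOnBall (0 : ℝ → ℂ) p 0 1 := by
      refine ⟨hrad, one_pos, fun {y} _ => ?_⟩
      simpa [hp, ContinuousMultilinearMap.mkPiRing_apply, Complex.real_smul, mul_comm,
        Complex.ofReal_pow] using hkey y
    have hp0 : p = 0 := HasFPowerSeriesAt.eq_zero ⟨1, hball⟩
    have hcz : c n = 0 := by
      have h1 : p n (fun _ => (1:ℝ)) = 0 := by rw [hp0]; rfl
      simpa [hp, ContinuousMultilinearMap.mkPiRing_apply] using h1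
    have hne : Complex.I ^ n / (Nat.factorial n : ℂ) ≠ 0 :=
      div_ne_zero (pow_ne_zero _ Complex.I_ne_zero)
        (Nat.cast_ne_zero.2 (Nat.factorial_ne_zero n))
    exact (mul_eq_zero.mp hcz).resolve_left hne
  · intro h l
    have hk := key_lemma θ φ hθ hφ l
    simp only [h, mul_zero] at hk
    exact (hk.unique hasSum_zero)
end

section
/- Let k, f : [0,2π] → ℝ be continuous, and set θ(t) = ∫₀^t k(s) ds and φ(t) = ∫₀^t f(s) ds. The curve γ_λ(t) = ∫₀^t exp(i(θ(s) + λφ(s))) ds satisfies γ_λ(2π) = γ_λ(0) for all λ ∈ ℝ if and only if ∫₀^{2π} exp(iθ(t)) · φ(t)ⁿ dt = 0 for all n ∈ ℕ. -/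
open Real MeasureTheory intervalIntegral

open Complex in
private lemma key_hasSum (θ φ : ℝ → ℝ)
    (hθc : ContinuousOn θ (Set.Icc 0 (2 * π)))
    (hφc : ContinuousOn φ (Set.Icc 0 (2 * π)))
    (M : ℝ) (hM : ∀ t ∈ Set.Icc (0:ℝ) (2 * π), |φ t| ≤ M) (l : ℝ) :
    HasSum (fun n : ℕ => (Complex.I * l) ^ n / (n.factorial) *
        ∫ t in (0:ℝ)..(2 * π), Complex.exp (Complex.I * (θ t : ℂ)) * (φ t : ℂ) ^ n)
      (∫ t in (0:ℝ)..(2 * π),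
        Complex.exp (Complex.I * ((θ t : ℂ) + (l : ℂ) * (φ t : ℂ)))) := by
  have hπ : (0:ℝ) ≤ 2 * π := by positivity
  have hexp1 : ∀ x : ℝ, ‖Complex.exp (Complex.I * (x:ℂ))‖ = 1 := by
    intro x; rw [mul_comm]; exact Complex.norm_exp_ofReal_mul_I x
  set g : ℕ → ℝ → ℂ := fun n t =>
    (Complex.I * l) ^ n / (n.factorial) * (Complex.exp (Complex.I * (θ t : ℂ)) * (φ t : ℂ) ^ n) with hg
  have hθC : ContinuousOn (fun t => Complex.exp (Complex.I * (θ t : ℂ))) (Set.Icc 0 (2 * π)) :=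
    Complex.continuous_exp.comp_continuousOn
      (continuousOn_const.mul (Complex.continuous_ofReal.comp_continuousOn hθc))
  have hφC : ContinuousOn (fun t => ((φ t : ℂ))) (Set.Icc 0 (2 * π)) :=
    Complex.continuous_ofReal.comp_continuousOn hφc
  have hgc : ∀ n, ContinuousOn (g n) (Set.Icc 0 (2 * π)) := fun n =>
    continuousOn_const.mul (hθC.mul (hφC.pow n))
  have hgint : ∀ n, IntegrableOn (g n) (Set.Ioc 0 (2 * π)) := fun n =>
    ((hgc n).integrableOn_Icc).mono_set Set.Ioc_subset_Icc_self
  have hM0 : 0 ≤ M := le_trans (abs_nonneg _) (hM 0 ⟨le_refl _, hπ⟩)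
  have hbound : ∀ n : ℕ, ∀ t ∈ Set.Ioc (0:ℝ) (2 * π), ‖g n t‖ ≤ (|l| * M) ^ n / (n.factorial) := by
    intro n t ht
    have htI : t ∈ Set.Icc (0:ℝ) (2 * π) := Set.Ioc_subset_Icc_self ht
    have h1 : ‖g n t‖ = |l| ^ n / (n.factorial) * |φ t| ^ n := by
      simp [hg, norm_mul, norm_div, norm_pow, hexp1, map_mul,
        Complex.norm_I, Complex.norm_real, Complex.norm_natCast]
    rw [h1]
    calc |l| ^ n / ((n.factorial : ℝ)) * |φ t| ^ n
        ≤ |l| ^ n / ((n.factorial : ℝ)) * M ^ n := by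
          exact mul_le_mul_of_nonneg_left
            (pow_le_pow_left₀ (abs_nonneg _) (hM t htI) n) (by positivity)
      _ = (|l| * M) ^ n / (n.factorial) := by rw [mul_pow]; ring
  have hsummable : Summable (fun n : ℕ => (2 * π) * ((|l| * M) ^ n / (n.factorial))) :=
    (Real.summable_pow_div_factorial (|l| * M)).mul_left _
  have hF_sum : Summable fun n : ℕ => ∫ t in Set.Ioc (0:ℝ) (2 * π), ‖g n t‖ := by
    refine Summable.of_nonneg_of_le
      (fun n => integral_nonneg fun t => norm_nonneg _) (fun n => ?_) hsummable
    have hle : ∫ t in Set.Ioc (0:ℝ) (2 * π), ‖g n t‖ ≤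
        ∫ _ in Set.Ioc (0:ℝ) (2 * π), ((|l| * M) ^ n / (n.factorial)) := by
      refine setIntegral_mono_on ((hgint n).norm) ?_ measurableSet_Ioc (hbound n)
      exact integrableOn_const (by rw [Real.volume_Ioc]; exact ENNReal.ofReal_ne_top)
    refine hle.trans ?_
    rw [setIntegral_const, measureReal_def, Real.volume_Ioc, smul_eq_mul]
    rw [ENNReal.toReal_ofReal (by linarith)]
    apply le_of_eq
    ring
  have main := hasSum_integral_of_summable_integral_norm hgint hF_sum
  have hpt : ∀ t : ℝ, ∑' n, g n t =
      Complex.exp (Complex.I * ((θ t : ℂ) + (l : ℂ) * (φ t : ℂ))) := by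
    intro t
    have hs : HasSum (fun n : ℕ => (Complex.I * l * φ t) ^ n / (n.factorial))
        (Complex.exp (Complex.I * l * φ t)) := by
      rw [Complex.exp_eq_exp_ℂ]; exact NormedSpace.expSeries_div_hasSum_exp _
    have hs2 := hs.mul_left (Complex.exp (Complex.I * (θ t : ℂ)))
    have heq : (fun n : ℕ => Complex.exp (Complex.I * (θ t : ℂ)) *
        ((Complex.I * l * φ t) ^ n / (n.factorial))) = fun n => g n t := by
      funext n; simp only [hg]; rw [mul_pow, mul_pow]; ring
    rw [heq] at hs2
    rw [hs2.tsum_eq, ← Complex.exp_add]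
    ring_nf
  rw [intervalIntegral.integral_of_le hπ]
  convert main using 1
  · rfl
  · funext n
    rw [intervalIntegral.integral_of_le hπ, ← MeasureTheory.integral_const_mul]
  · exact (setIntegral_congr_fun measurableSet_Ioc fun t _ => (hpt t).symm)


theorem stmt_2 (k f : ℝ → ℝ)
    (hk : ContinuousOn k (Set.Icc 0 (2 * π)))
    (hf : ContinuousOn f (Set.Icc 0 (2 * π)))
    (θ φ : ℝ → ℝ)
    (hθ : ∀ t, θ t = ∫ s in (0:ℝ)..t, k s)
    (hφ : ∀ t, φ t = ∫ s in (0:ℝ)..t, f s)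
    (γ : ℝ → ℝ → ℂ)
    (hγ : ∀ l t, γ l t = ∫ s in (0:ℝ)..t,
      Complex.exp (Complex.I * ((θ s : ℂ) + (l : ℂ) * (φ s : ℂ)))) :
    (∀ l : ℝ, γ l (2 * π) = γ l 0) ↔
    (∀ n : ℕ, ∫ t in (0:ℝ)..(2 * π),
        Complex.exp (Complex.I * (θ t : ℂ)) * (φ t : ℂ) ^ n = 0) := by
  have hπ : (0:ℝ) ≤ 2 * π := by positivity
  -- continuity of θ and φ
  have hprim : ∀ (u : ℝ → ℝ), ContinuousOn u (Set.Icc 0 (2 * π)) →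
      ContinuousOn (fun x => ∫ t in (0:ℝ)..x, u t) (Set.Icc 0 (2 * π)) := by
    intro u hu
    have := intervalIntegral.continuousOn_primitive_interval
      (a := (0:ℝ)) (b := 2 * π) (f := u) (μ := volume) ?_
    · rwa [Set.uIcc_of_le hπ] at this
    · rw [Set.uIcc_of_le hπ]; exact hu.integrableOn_Icc
  have hθc : ContinuousOn θ (Set.Icc 0 (2 * π)) :=
    (hprim k hk).congr fun t _ => hθ t
  have hφc : ContinuousOn φ (Set.Icc 0 (2 * π)) :=
    (hprim f hf).congr fun t _ => hφ t
  obtain ⟨M, hM⟩ := (isCompact_Icc (a := (0:ℝ)) (b := 2 * π)).exists_bound_of_continuousOn hφc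
  simp only [Real.norm_eq_abs] at hM
  have hM0 : 0 ≤ M := le_trans (abs_nonneg _) (hM 0 ⟨le_refl _, hπ⟩)
  set A : ℕ → ℂ := fun n => ∫ t in (0:ℝ)..(2 * π),
      Complex.exp (Complex.I * (θ t : ℂ)) * (φ t : ℂ) ^ n with hA
  have key : ∀ l : ℝ, HasSum (fun n : ℕ => (Complex.I * l) ^ n / (n.factorial) * A n) (γ l (2 * π)) := by
    intro l
    have := key_hasSum θ φ hθc hφc M hM l
    rwa [← hγ l (2 * π)] at this
  have h0 : ∀ l : ℝ, γ l 0 = 0 := by intro l; rw [hγ]; simp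
  constructor
  · intro h n
    have hzero : ∀ l : ℝ, γ l (2 * π) = 0 := fun l => (h l).trans (h0 l)
    set c : ℕ → ℂ := fun n => Complex.I ^ n / (n.factorial) * A n with hc
    set p : FormalMultilinearSeries ℝ ℝ ℂ :=
      fun n => ContinuousMultilinearMap.mkPiRing ℝ (Fin n) (c n) with hp
    have hpn : ∀ n, ‖p n‖ = ‖c n‖ := fun n => ContinuousMultilinearMap.norm_mkPiRing _
    have hAle : ∀ n : ℕ, ‖A n‖ ≤ M ^ n * (2 * π) := by
      intro n
      have := intervalIntegral.norm_integral_le_of_norm_le_const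
        (C := M ^ n) (a := (0:ℝ)) (b := 2 * π)
        (f := fun t => Complex.exp (Complex.I * (θ t : ℂ)) * (φ t : ℂ) ^ n) ?_
      · simpa [abs_of_nonneg hπ] using this
      · intro x hx
        rw [Set.uIoc_of_le hπ] at hx
        have hxI : x ∈ Set.Icc (0:ℝ) (2 * π) := Set.Ioc_subset_Icc_self hx
        have hexp1 : ‖Complex.exp (Complex.I * ((θ x):ℂ))‖ = 1 := by
          rw [mul_comm]; exact Complex.norm_exp_ofReal_mul_I _
        have : ‖Complex.exp (Complex.I * (θ x : ℂ)) * (φ x : ℂ) ^ n‖ = |φ x| ^ n := by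
          simp [norm_mul, norm_pow, hexp1, Complex.norm_real]
        rw [this]
        exact pow_le_pow_left₀ (abs_nonneg _) (hM x hxI) n
    have hsum : Summable fun n : ℕ => ‖p n‖ * (1:ℝ) ^ n := by
      refine Summable.of_nonneg_of_le (fun n => by positivity) (fun n => ?_)
        ((Real.summable_pow_div_factorial M).mul_left (2 * π))
      rw [hpn, one_pow, mul_one, hc]
      calc ‖Complex.I ^ n / ((n.factorial) : ℂ) * A n‖ = ‖A n‖ / (n.factorial) := by
            simp [norm_div, norm_pow, Nat.abs_cast, Complex.norm_natCast]
            ring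
        _ ≤ (M ^ n * (2 * π)) / (n.factorial) := by gcongr; exact hAle n
        _ = 2 * π * (M ^ n / (n.factorial)) := by ring
    have hball : HasFPowerSeriesOnBall (0 : ℝ → ℂ) p 0 1 := by
      refine ⟨?_, one_pos, ?_⟩
      · have := p.le_radius_of_summable_norm (r := 1) (by simpa using hsum)
        simpa using this
      · intro y _
        have hk := key y
        rw [hzero y] at hk
        have : (fun n : ℕ => p n fun _ => y) =
            fun n : ℕ => (Complex.I * y) ^ n / (n.factorial) * A n := by
          funext n
          rw [hp]
          rw [ContinuousMultilinearMap.mkPiRing_apply]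
          simp only [Finset.prod_const, Finset.card_univ, Fintype.card_fin, hc]
          rw [Complex.real_smul, mul_pow]
          push_cast
          ring
        rw [this]
        simpa using hk
    have hp0 : p = 0 := HasFPowerSeriesAt.eq_zero ⟨1, hball⟩
    have hcn : c n = 0 := by
      have := congrFun hp0 n
      have h1 := congrFun (congrArg DFunLike.coe this) (fun _ : Fin n => (1:ℝ))
      rw [hp] at h1
      simpa using h1
    have hne : (Complex.I ^ n / ((n.factorial) : ℂ)) ≠ 0 :=
      div_ne_zero (pow_ne_zero _ Complex.I_ne_zero)
        (Nat.cast_ne_zero.mpr n.factorial_ne_zero)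
    have : A n = 0 := by
      rcases mul_eq_zero.mp hcn with h' | h'
      · exact absurd h' hne
      · exact h'
    exact this
  · intro h l
    have hk := key l
    have hAz : ∀ n, A n = 0 := h
    simp only [hAz, mul_zero] at hk
    rw [h0 l]
    exact hk.unique hasSum_zero
end

section
/- Let θ, φ : [0,2π] → ℝ with θ, φ continuously differentiable. If ∫₀^{2π} exp(iθ(t)) · φ(t)ⁿ dt = 0 for all n ∈ ℕ, then for every bounded integrable function g : ℝ → ℝ and every n ∈ ℕ we have ∫₀^{2π} exp(iθ(t)) · g(φ(t))ⁿ dt = 0. -/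
open Real MeasureTheory intervalIntegral

open Polynomial

theorem stmt_3 (θ φ : ℝ → ℝ)
    (hθ : ContDiffOn ℝ 1 θ (Set.Icc 0 (2 * π)))
    (hφ : ContDiffOn ℝ 1 φ (Set.Icc 0 (2 * π)))
    (h : ∀ n : ℕ, ∫ t in (0:ℝ)..(2 * π),
        Complex.exp (Complex.I * (θ t : ℂ)) * (φ t : ℂ) ^ n = 0)
    (g : ℝ → ℝ) (hgb : Bornology.IsBounded (Set.range g)) (hgm : Measurable g) :
    ∀ n : ℕ, ∫ t in (0:ℝ)..(2 * π),
        Complex.exp (Complex.I * (θ t : ℂ)) * (g (φ t) : ℂ) ^ n = 0 := by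
  have hT : (0:ℝ) < 2 * π := by positivity
  have hθc : ContinuousOn θ (Set.Icc 0 (2 * π)) := hθ.continuousOn
  have hφc : ContinuousOn φ (Set.Icc 0 (2 * π)) := hφ.continuousOn
  set w : ℝ → ℂ := fun t => Complex.exp (Complex.I * (θ t : ℂ)) with hw
  have hwc : ContinuousOn w (Set.Icc 0 (2 * π)) :=
    Complex.continuous_exp.comp_continuousOn
      (continuousOn_const.mul (Complex.continuous_ofReal.comp_continuousOn hθc))
  have hwnorm : ∀ t, ‖w t‖ = 1 := by
    intro t
    simp [hw, Complex.norm_exp]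
  have huIcc : Set.uIcc (0:ℝ) (2*π) = Set.Icc 0 (2*π) := Set.uIcc_of_le hT.le
  have hφC : ∀ i : ℕ, IntervalIntegrable (fun t => w t * (φ t : ℂ) ^ i) volume 0 (2*π) := by
    intro i
    apply ContinuousOn.intervalIntegrable
    rw [huIcc]
    exact hwc.mul ((Complex.continuous_ofReal.comp_continuousOn hφc).pow i)
  -- Step 1 : real polynomial moments vanish
  have key1 : ∀ p : ℝ[X],
      (∫ t in (0:ℝ)..(2*π), w t * ((p.eval (φ t) : ℝ) : ℂ)) = 0 := by
    intro p
    have hev : ∀ t : ℝ, ((p.eval (φ t) : ℝ) : ℂ)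
        = ∑ i ∈ Finset.range (p.natDegree + 1), ((p.coeff i : ℝ) : ℂ) * (φ t : ℂ) ^ i := by
      intro t
      rw [Polynomial.eval_eq_sum_range]
      push_cast
      ring
    calc (∫ t in (0:ℝ)..(2*π), w t * ((p.eval (φ t) : ℝ) : ℂ))
        = ∫ t in (0:ℝ)..(2*π), ∑ i ∈ Finset.range (p.natDegree + 1),
            ((p.coeff i : ℝ) : ℂ) * (w t * (φ t : ℂ) ^ i) := by
          refine intervalIntegral.integral_congr fun t _ => ?_
          rw [hev t, Finset.mul_sum]
          exact Finset.sum_congr rfl fun i _ => by ring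
      _ = ∑ i ∈ Finset.range (p.natDegree + 1),
            ((p.coeff i : ℝ) : ℂ) * ∫ t in (0:ℝ)..(2*π), w t * (φ t : ℂ) ^ i := by
          rw [intervalIntegral.integral_finset_sum (fun i _ => (hφC i).const_mul _)]
          exact Finset.sum_congr rfl fun i _ => intervalIntegral.integral_const_mul _ _
      _ = 0 := by simp [hw, h]
  -- combinations with I
  have hpoly_int : ∀ p : ℝ[X],
      IntervalIntegrable (fun t => w t * ((p.eval (φ t) : ℝ) : ℂ)) volume 0 (2*π) := by
    intro p
    apply ContinuousOn.intervalIntegrable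
    rw [huIcc]
    exact hwc.mul (Complex.continuous_ofReal.comp_continuousOn (p.continuous_aeval.comp_continuousOn hφc))
  have key2 : ∀ pr pq : ℝ[X],
      (∫ t in (0:ℝ)..(2*π), w t * (((pr.eval (φ t) : ℝ) : ℂ)
        + Complex.I * ((pq.eval (φ t) : ℝ) : ℂ))) = 0 := by
    intro pr pq
    have e : (∫ t in (0:ℝ)..(2*π), w t * (((pr.eval (φ t) : ℝ) : ℂ)
        + Complex.I * ((pq.eval (φ t) : ℝ) : ℂ)))
        = ∫ t in (0:ℝ)..(2*π), (w t * ((pr.eval (φ t) : ℝ) : ℂ)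
            + Complex.I * (w t * ((pq.eval (φ t) : ℝ) : ℂ))) :=
      intervalIntegral.integral_congr fun t _ => by ring
    rw [e, intervalIntegral.integral_add (hpoly_int pr) ((hpoly_int pq).const_mul _),
      intervalIntegral.integral_const_mul, key1 pr, key1 pq, mul_zero, add_zero]
  intro n
  -- the bounded measurable function
  set h0 : ℝ → ℂ := fun x => ((g x : ℂ)) ^ n with hh0
  obtain ⟨C, hC⟩ : ∃ C : ℝ, ∀ x : ℝ, ‖h0 x‖ ≤ C := by
    obtain ⟨C, hC⟩ := hgb.exists_norm_le
    refine ⟨C ^ n, fun x => ?_⟩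
    have : ‖g x‖ ≤ C := hC _ ⟨x, rfl⟩
    calc ‖h0 x‖ = ‖g x‖ ^ n := by
          simp [hh0, Complex.norm_real]
      _ ≤ C ^ n := pow_le_pow_left₀ (norm_nonneg _) this n
  have hm0 : Measurable h0 := (Complex.measurable_ofReal.comp hgm).pow_const n
  -- the pushforward measure
  set μ0 : Measure ℝ := volume.restrict (Set.Ioc (0:ℝ) (2*π)) with hμ0
  have hφae : AEMeasurable φ μ0 :=
    (hφc.mono Set.Ioc_subset_Icc_self).aemeasurable measurableSet_Ioc
  haveI : IsFiniteMeasure μ0 := by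
    constructor
    rw [hμ0, Measure.restrict_apply_univ, Real.volume_Ioc]
    exact ENNReal.ofReal_lt_top
  set ν : Measure ℝ := Measure.map φ μ0 with hν
  haveI : IsFiniteMeasure ν := Measure.isFiniteMeasure_map μ0 φ
  have hh0ν : Integrable h0 ν := by
    refine Integrable.mono' (integrable_const C) hm0.aestronglyMeasurable ?_
    filter_upwards with x using hC x
  -- integrability of the main integrand
  have hwint : AEStronglyMeasurable w μ0 :=
    (hwc.mono Set.Ioc_subset_Icc_self).aestronglyMeasurable measurableSet_Ioc
  have hh0φ : IntervalIntegrable (fun t => h0 (φ t)) volume 0 (2*π) := by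
    rw [intervalIntegrable_iff_integrableOn_Ioc_of_le hT.le]
    refine Integrable.mono' (integrable_const C)
      (hm0.comp_aemeasurable hφae).aestronglyMeasurable ?_
    filter_upwards with t using hC _
  have hwh0 : IntervalIntegrable (fun t => w t * h0 (φ t)) volume 0 (2*π) := by
    rw [intervalIntegrable_iff_integrableOn_Ioc_of_le hT.le]
    refine Integrable.mono' (integrable_const C) (hwint.mul
      (hm0.comp_aemeasurable hφae).aestronglyMeasurable) ?_
    filter_upwards with t
    rw [norm_mul, hwnorm, one_mul]
    exact hC _
  -- main estimate
  have main : ∀ ε : ℝ, 0 < ε → ‖∫ t in (0:ℝ)..(2*π), w t * h0 (φ t)‖ ≤ ε := by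
    intro ε hε
    obtain ⟨c, csupp, hcapprox, ccont, -⟩ :=
      hh0ν.exists_hasCompactSupport_integral_sub_le (half_pos hε)
    -- compact range of φ
    have hK : IsCompact (φ '' Set.Icc 0 (2*π)) := isCompact_Icc.image_of_continuousOn hφc
    obtain ⟨M, hM⟩ : ∃ M : ℝ, φ '' Set.Icc 0 (2*π) ⊆ Set.Icc (-M) M := by
      obtain ⟨r, hr⟩ := hK.isBounded.subset_closedBall 0
      exact ⟨r, by rwa [Real.closedBall_eq_Icc, zero_sub, zero_add] at hr⟩
    set ε' : ℝ := ε / (16 * π) with hε'def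
    have hε' : 0 < ε' := by positivity
    -- Weierstrass approximation
    have approx : ∀ f : ℝ → ℝ, Continuous f →
        ∃ p : ℝ[X], ∀ x ∈ Set.Icc (-M) M, |f x - p.eval x| ≤ ε' := by
      intro f hf
      obtain ⟨p, hp⟩ := exists_polynomial_near_continuousMap (-M) M
        ⟨fun x : Set.Icc (-M) M => f x, hf.comp continuous_subtype_val⟩ ε' hε'
      refine ⟨p, fun x hx => ?_⟩
      have h2 := (p.toContinuousMapOn (Set.Icc (-M) M) -
        ⟨fun x : Set.Icc (-M) M => f x, hf.comp continuous_subtype_val⟩).norm_coe_le_norm ⟨x, hx⟩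
      have h3 : ‖p.eval x - f x‖ ≤ ‖p.toContinuousMapOn (Set.Icc (-M) M) -
          (⟨fun x : Set.Icc (-M) M => f x, hf.comp continuous_subtype_val⟩ : C(Set.Icc (-M) M, ℝ))‖ := by
        simpa [Polynomial.toContinuousMapOn, Polynomial.toContinuousMap] using h2
      rw [abs_sub_comm]
      exact le_of_lt (lt_of_le_of_lt h3 hp)
    obtain ⟨pr, hpr⟩ := approx (fun x => (c x).re) (Complex.continuous_re.comp ccont)
    obtain ⟨pq, hpq⟩ := approx (fun x => (c x).im) (Complex.continuous_im.comp ccont)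
    set a : ℝ → ℂ := fun x => ((pr.eval x : ℝ) : ℂ) + Complex.I * ((pq.eval x : ℝ) : ℂ) with ha
    have hca : ∀ x ∈ Set.Icc (-M) M, ‖c x - a x‖ ≤ 2 * ε' := by
      intro x hx
      have h1 := hpr x hx
      have h2 := hpq x hx
      have hre : (c x - a x).re = (c x).re - pr.eval x := by
        simp [ha, Complex.sub_re, Complex.add_re, Complex.mul_re]
      have him : (c x - a x).im = (c x).im - pq.eval x := by
        simp [ha, Complex.sub_im, Complex.add_im, Complex.mul_im]
      calc ‖c x - a x‖ ≤ |(c x - a x).re| + |(c x - a x).im| := by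
            exact Complex.norm_le_abs_re_add_abs_im _
        _ ≤ ε' + ε' := by rw [hre, him]; exact add_le_add h1 h2
        _ = 2 * ε' := by ring
    -- integrabilities
    have haφ : IntervalIntegrable (fun t => a (φ t)) volume 0 (2*π) := by
      apply ContinuousOn.intervalIntegrable
      rw [huIcc]
      exact ((Complex.continuous_ofReal.comp pr.continuous_aeval).comp_continuousOn hφc).add
        (continuousOn_const.mul
          ((Complex.continuous_ofReal.comp pq.continuous_aeval).comp_continuousOn hφc))
    have hcφ : IntervalIntegrable (fun t => c (φ t)) volume 0 (2*π) := by
      apply ContinuousOn.intervalIntegrable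
      rw [huIcc]
      exact ccont.comp_continuousOn hφc
    have hwa : IntervalIntegrable (fun t => w t * a (φ t)) volume 0 (2*π) := by
      apply ContinuousOn.intervalIntegrable
      rw [huIcc]
      refine hwc.mul ?_
      exact ((Complex.continuous_ofReal.comp pr.continuous_aeval).comp_continuousOn hφc).add
        (continuousOn_const.mul
          ((Complex.continuous_ofReal.comp pq.continuous_aeval).comp_continuousOn hφc))
    have hint2 : IntervalIntegrable (fun t => ‖h0 (φ t) - c (φ t)‖) volume 0 (2*π) :=
      (hh0φ.sub hcφ).norm
    have hint3 : IntervalIntegrable (fun t => ‖c (φ t) - a (φ t)‖) volume 0 (2*π) :=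
      (hcφ.sub haφ).norm
    -- ∫ w (a∘φ) = 0
    have hIa : (∫ t in (0:ℝ)..(2*π), w t * a (φ t)) = 0 := key2 pr pq
    have e1 : (∫ t in (0:ℝ)..(2*π), w t * h0 (φ t))
        = ∫ t in (0:ℝ)..(2*π), w t * (h0 (φ t) - a (φ t)) := by
      have e2 : (∫ t in (0:ℝ)..(2*π), w t * (h0 (φ t) - a (φ t)))
          = ∫ t in (0:ℝ)..(2*π), (w t * h0 (φ t) - w t * a (φ t)) :=
        intervalIntegral.integral_congr fun t _ => by ring
      rw [e2, intervalIntegral.integral_sub hwh0 hwa, hIa, sub_zero]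
    -- part A : L¹ approximation bound
    have hA : (∫ t in (0:ℝ)..(2*π), ‖h0 (φ t) - c (φ t)‖) ≤ ε / 2 := by
      have hmeasnorm : AEStronglyMeasurable (fun y => ‖h0 y - c y‖) ν :=
        (hm0.aestronglyMeasurable.sub ccont.aestronglyMeasurable).norm
      have emap : (∫ t in (0:ℝ)..(2*π), ‖h0 (φ t) - c (φ t)‖)
          = ∫ y, ‖h0 y - c y‖ ∂ν := by
        rw [intervalIntegral.integral_of_le hT.le, hν,
          MeasureTheory.integral_map hφae hmeasnorm]
      rw [emap]
      exact hcapprox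
    -- part B : uniform bound on compact range
    have hB : (∫ t in (0:ℝ)..(2*π), ‖c (φ t) - a (φ t)‖) ≤ ε / 2 := by
      have hπ := pi_pos
      calc (∫ t in (0:ℝ)..(2*π), ‖c (φ t) - a (φ t)‖)
          ≤ ∫ _t in (0:ℝ)..(2*π), 2 * ε' := by
            refine intervalIntegral.integral_mono_on hT.le hint3 intervalIntegrable_const
              fun t ht => ?_
            exact hca _ (hM ⟨t, ht, rfl⟩)
        _ = (2*π) * (2 * ε') := by
            rw [intervalIntegral.integral_const, smul_eq_mul, sub_zero]
        _ ≤ ε / 2 := by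
            have h4 : 2 * π * (2 * (ε / (16 * π))) = ε / 4 := by
              field_simp
              ring
            rw [hε'def, h4]
            linarith
    calc ‖∫ t in (0:ℝ)..(2*π), w t * h0 (φ t)‖
        = ‖∫ t in (0:ℝ)..(2*π), w t * (h0 (φ t) - a (φ t))‖ := by rw [e1]
      _ ≤ ∫ t in (0:ℝ)..(2*π), ‖w t * (h0 (φ t) - a (φ t))‖ :=
          intervalIntegral.norm_integral_le_integral_norm hT.le
      _ = ∫ t in (0:ℝ)..(2*π), ‖h0 (φ t) - a (φ t)‖ :=
          intervalIntegral.integral_congr fun t _ => by rw [norm_mul, hwnorm, one_mul]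
      _ ≤ ∫ t in (0:ℝ)..(2*π), (‖h0 (φ t) - c (φ t)‖ + ‖c (φ t) - a (φ t)‖) := by
          refine intervalIntegral.integral_mono_on hT.le ((hh0φ.sub haφ).norm)
            (hint2.add hint3) fun t _ => ?_
          exact norm_sub_le_norm_sub_add_norm_sub _ _ _
      _ = (∫ t in (0:ℝ)..(2*π), ‖h0 (φ t) - c (φ t)‖)
            + ∫ t in (0:ℝ)..(2*π), ‖c (φ t) - a (φ t)‖ :=
          intervalIntegral.integral_add hint2 hint3
      _ ≤ ε / 2 + ε / 2 := add_le_add hA hB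
      _ = ε := by ring
  have hfin : ‖∫ t in (0:ℝ)..(2*π), w t * h0 (φ t)‖ ≤ 0 :=
    le_of_forall_pos_le_add fun ε hε => by simpa using main ε hε
  have : (∫ t in (0:ℝ)..(2*π), w t * h0 (φ t)) = 0 :=
    norm_le_zero_iff.mp hfin
  exact this
end

section
/- Let f : [0,2π] → ℝ be continuous with f not identically zero, and let Λ = {λ ∈ ℝ : the curve with curvature λf is closed}, i.e. Λ = {λ : ∫₀^{2π} exp(iλ·φ(t)) dt = 0} where φ(t) = ∫₀^t f(s) ds. Then Λ has no accumulation point in ℝ. -/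
open Real MeasureTheory intervalIntegral Filter

open Topology

set_option maxHeartbeats 1000000 in
theorem stmt_6 (f : ℝ → ℝ)
    (hf : ContinuousOn f (Set.Icc 0 (2 * π)))
    (hne : ∃ t ∈ Set.Icc 0 (2 * π), f t ≠ 0)
    (φ : ℝ → ℝ) (hφ : ∀ t, φ t = ∫ s in (0:ℝ)..t, f s)
    (Λ : Set ℝ)
    (hΛ : Λ = {l : ℝ | ∫ t in (0:ℝ)..(2 * π),
      Complex.exp (Complex.I * (l : ℂ) * (φ t : ℂ)) = 0}) :
    ∀ x : ℝ, ¬ AccPt x (𝓟 Λ) := by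
  have hπ : (0:ℝ) < 2 * π := by positivity
  have huIcc : Set.uIcc (0:ℝ) (2 * π) = Set.Icc 0 (2 * π) := Set.uIcc_of_le hπ.le
  -- f is interval integrable
  have hfi : IntervalIntegrable f volume 0 (2 * π) := by
    apply ContinuousOn.intervalIntegrable; rwa [huIcc]
  -- φ is continuous on [0, 2π]
  have hφc : ContinuousOn φ (Set.uIcc 0 (2 * π)) := by
    have := continuousOn_primitive_interval (a := (0:ℝ)) (b := 2 * π) (f := f)
      (μ := volume) (by rw [huIcc]; exact hf.integrableOn_compact isCompact_Icc)
    have hfun : φ = fun x => ∫ t in (0:ℝ)..x, f t := funext hφ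
    rw [hfun]; exact this
  -- bound on φ
  set M : ℝ := ∫ s in (0:ℝ)..(2 * π), |f s| with hM
  have hM0 : 0 ≤ M := intervalIntegral.integral_nonneg hπ.le (fun _ _ => abs_nonneg _)
  have hφbound : ∀ t ∈ Set.uIcc (0:ℝ) (2 * π), |φ t| ≤ M := by
    intro t ht
    rw [huIcc] at ht
    rw [hφ t]
    calc |∫ s in (0:ℝ)..t, f s| ≤ ∫ s in (0:ℝ)..t, |f s| :=
          intervalIntegral.abs_integral_le_integral_abs ht.1
      _ ≤ M := by
          apply intervalIntegral.integral_mono_interval le_rfl ht.1 ht.2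
          · exact Filter.Eventually.of_forall fun _ => abs_nonneg _
          · exact hfi.abs
  -- the entire function
  set F : ℂ → ℂ := fun z => ∫ t in (0:ℝ)..(2 * π), Complex.exp (Complex.I * z * (φ t : ℂ))
    with hF
  -- measurability of integrands
  have hmeas : ∀ z : ℂ, AEStronglyMeasurable (fun t : ℝ => Complex.exp (Complex.I * z * (φ t : ℂ)))
      (volume.restrict (Set.uIoc 0 (2 * π))) := by
    intro z
    apply ContinuousOn.aestronglyMeasurable _ measurableSet_uIoc
    apply Continuous.comp_continuousOn Complex.continuous_exp
    apply (continuous_const.mul Complex.continuous_ofReal).comp_continuousOn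
    exact hφc.mono Set.uIoc_subset_uIcc
  have hint : ∀ z : ℂ, IntervalIntegrable
      (fun t : ℝ => Complex.exp (Complex.I * z * (φ t : ℂ))) volume 0 (2 * π) := by
    intro z
    apply ContinuousOn.intervalIntegrable
    apply Continuous.comp_continuousOn Complex.continuous_exp
    apply (continuous_const.mul Complex.continuous_ofReal).comp_continuousOn
    exact hφc
  -- F is differentiable
  have hdiff : Differentiable ℂ F := by
    intro z₀
    have h_bound : ∀ᵐ t ∂(volume : Measure ℝ), t ∈ Set.uIoc (0:ℝ) (2 * π) →
        ∀ z ∈ Metric.ball z₀ 1,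
          ‖(Complex.I * (φ t : ℂ)) * Complex.exp (Complex.I * z * (φ t : ℂ))‖ ≤
            M * Real.exp ((‖z₀‖ + 1) * M) := by
      apply Filter.Eventually.of_forall
      intro t ht z hz
      have hφt : |φ t| ≤ M := hφbound t (Set.uIoc_subset_uIcc ht)
      have h1 : ‖Complex.I * (φ t : ℂ)‖ = |φ t| := by
        simp [Complex.norm_real]
      have h2 : ‖Complex.exp (Complex.I * z * (φ t : ℂ))‖ ≤ Real.exp ((‖z₀‖ + 1) * M) := by
        rw [Complex.norm_exp]
        apply Real.exp_le_exp.2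
        have hre : (Complex.I * z * (φ t : ℂ)).re = -z.im * φ t := by
          simp [Complex.mul_re, Complex.mul_im]
        rw [hre]
        calc -z.im * φ t ≤ |(-z.im) * φ t| := le_abs_self _
          _ = |z.im| * |φ t| := by rw [abs_mul, abs_neg]
          _ ≤ (‖z₀‖ + 1) * M := by
              apply mul_le_mul _ hφt (abs_nonneg _) (by positivity)
              calc |z.im| ≤ ‖z‖ := Complex.abs_im_le_norm z
                _ ≤ ‖z₀‖ + 1 := by
                    have hb := mem_ball_iff_norm.1 hz
                    calc ‖z‖ ≤ ‖z₀‖ + ‖z - z₀‖ := norm_le_insert' _ _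
                      _ ≤ ‖z₀‖ + 1 := by linarith
      calc ‖Complex.I * (φ t : ℂ) * Complex.exp (Complex.I * z * (φ t : ℂ))‖
          = ‖Complex.I * (φ t : ℂ)‖ * ‖Complex.exp (Complex.I * z * (φ t : ℂ))‖ := norm_mul _ _
        _ ≤ M * Real.exp ((‖z₀‖ + 1) * M) := by
            rw [h1]
            exact mul_le_mul hφt h2 (norm_nonneg _) hM0
    have h_diff : ∀ᵐ t ∂(volume : Measure ℝ), t ∈ Set.uIoc (0:ℝ) (2 * π) →
        ∀ z ∈ Metric.ball z₀ 1,
          HasDerivAt (fun z : ℂ => Complex.exp (Complex.I * z * (φ t : ℂ)))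
            ((Complex.I * (φ t : ℂ)) * Complex.exp (Complex.I * z * (φ t : ℂ))) z := by
      apply Filter.Eventually.of_forall
      intro t _ z _
      have hlin : HasDerivAt (fun z : ℂ => Complex.I * z * (φ t : ℂ))
          (Complex.I * (φ t : ℂ)) z := by
        simpa using ((hasDerivAt_id z).const_mul Complex.I).mul_const ((φ t : ℂ))
      simpa [mul_comm] using hlin.cexp
    have hF'meas : AEStronglyMeasurable
        (fun t : ℝ => (Complex.I * (φ t : ℂ)) * Complex.exp (Complex.I * z₀ * (φ t : ℂ)))
        (volume.restrict (Set.uIoc 0 (2 * π))) := by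
      apply AEStronglyMeasurable.mul _ (hmeas z₀)
      apply ContinuousOn.aestronglyMeasurable _ measurableSet_uIoc
      exact (continuous_const.mul Complex.continuous_ofReal).comp_continuousOn
        (hφc.mono Set.uIoc_subset_uIcc)
    have key := intervalIntegral.hasDerivAt_integral_of_dominated_loc_of_deriv_le
      (μ := volume) (a := 0) (b := 2 * π)
      (F := fun z t => Complex.exp (Complex.I * z * (φ t : ℂ)))
      (F' := fun z t => (Complex.I * (φ t : ℂ)) * Complex.exp (Complex.I * z * (φ t : ℂ)))
      (x₀ := z₀) (bound := fun _ => M * Real.exp ((‖z₀‖ + 1) * M)) (Metric.ball_mem_nhds z₀ one_pos)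
      (Filter.Eventually.of_forall fun z => hmeas z) (hint z₀)
      hF'meas h_bound intervalIntegrable_const h_diff
    exact key.2.differentiableAt
  -- F is not identically zero
  have hF0 : F 0 ≠ 0 := by
    have hval : F 0 = 2 * π := by
      rw [hF]
      simp
    rw [hval]
    exact_mod_cast ne_of_gt hπ
  -- conclusion
  intro x hx
  have hfreq : ∃ᶠ y in 𝓝[≠] (x:ℂ), F y = 0 := by
    have h1 : ∃ᶠ y in 𝓝[≠] x, (y:ℝ) ∈ Λ := by
      rw [frequently_nhdsWithin_iff]
      have := accPt_iff_frequently.1 hx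
      exact this.mono fun y hy => ⟨hy.2, hy.1⟩
    have htendsto : Tendsto (fun y : ℝ => (y:ℂ)) (𝓝[≠] x) (𝓝[≠] (x:ℂ)) := by
      apply ContinuousWithinAt.tendsto_nhdsWithin
        (Complex.continuous_ofReal.continuousWithinAt)
      intro y hy
      simpa [Complex.ofReal_inj] using hy
    apply htendsto.frequently
    refine h1.mono fun y hy => ?_
    rw [hΛ] at hy
    exact hy
  have hzero := (hdiff.differentiableOn.analyticOnNhd isOpen_univ).eqOn_zero_of_preconnected_of_frequently_eq_zero
    isPreconnected_univ (Set.mem_univ (x:ℂ)) hfreq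
  exact hF0 (hzero (Set.mem_univ 0))
end

section
/- Let θ, φ : [0,2π] → ℝ with ∫₀^{2π} exp(iθ(t)) φ(t)ⁿ dt = 0 for all n ∈ ℕ₀. Then for every real interval [a, a+δ] (δ ≥ 0), ∫_{φ^{-1}([a,a+δ])} exp(iθ(t)) dt = 0, where the integral is over {t ∈ [0,2π] : a ≤ φ(t) ≤ a+δ}. -/
open Real MeasureTheory intervalIntegral

theorem stmt_7 (θ φ : ℝ → ℝ)
    (hθ : ContDiffOn ℝ 1 θ (Set.Icc 0 (2 * π)))
    (hφ : ContDiffOn ℝ 1 φ (Set.Icc 0 (2 * π)))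
    (h : ∀ n : ℕ, ∫ t in (0:ℝ)..(2 * π),
        Complex.exp (Complex.I * (θ t : ℂ)) * (φ t : ℂ) ^ n = 0)
    (a δ : ℝ) (hδ : 0 ≤ δ) :
    ∫ t in {t ∈ Set.Icc 0 (2 * π) | a ≤ φ t ∧ φ t ≤ a + δ},
      Complex.exp (Complex.I * (θ t : ℂ)) = 0 := by
  have hπ : (0:ℝ) ≤ 2 * π := by positivity
  set K : Set ℝ := Set.Icc 0 (2 * π) with hKdef
  have hKm : MeasurableSet K := measurableSet_Icc
  have hKcomp : IsCompact K := isCompact_Icc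
  set f : ℝ → ℂ := fun t => Complex.exp (Complex.I * (θ t : ℂ)) with hfdef
  have hθc : ContinuousOn θ K := hθ.continuousOn
  have hφc : ContinuousOn φ K := hφ.continuousOn
  have hfc : ContinuousOn f K :=
    Complex.continuous_exp.comp_continuousOn
      (continuousOn_const.mul (Complex.continuous_ofReal.comp_continuousOn hθc))
  have hfnorm : ∀ t, ‖f t‖ = 1 := by
    intro t
    simp [hfdef, Complex.norm_exp]
  -- integrability of f times a continuous function
  have hintC : ∀ g : ℝ → ℂ, ContinuousOn g K →
      IntegrableOn (fun t => f t * g t) K := fun g hg =>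
    (hfc.mul hg).integrableOn_compact hKcomp
  -- Step A : monomial integrals vanish on K
  have hA : ∀ n : ℕ, ∫ t in K, f t * (φ t : ℂ) ^ n = 0 := by
    intro n
    have h' := h n
    rw [intervalIntegral.integral_of_le hπ] at h'
    rw [hKdef, MeasureTheory.integral_Icc_eq_integral_Ioc]
    exact h'
  -- Step B : polynomial integrals vanish
  have hB : ∀ p : Polynomial ℝ, ∫ t in K, f t * ((p.eval (φ t) : ℝ) : ℂ) = 0 := by
    intro p
    have hrw : ∀ t, f t * ((p.eval (φ t) : ℝ) : ℂ)
        = ∑ i ∈ Finset.range (p.natDegree + 1),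
            (p.coeff i : ℂ) * (f t * (φ t : ℂ) ^ i) := by
      intro t
      rw [Polynomial.eval_eq_sum_range]
      push_cast
      rw [Finset.mul_sum]
      exact Finset.sum_congr rfl fun i _ => by ring
    simp_rw [hrw]
    rw [MeasureTheory.integral_finset_sum]
    · exact Finset.sum_eq_zero fun i _ => by
        rw [MeasureTheory.integral_const_mul, hA i, mul_zero]
    · intro i _
      exact ((hintC _ ((Complex.continuous_ofReal.comp_continuousOn hφc).pow i)).const_mul _)
  -- Step C : integrals against continuous functions of φ vanish
  have hC : ∀ g : ℝ → ℝ, Continuous g → ∫ t in K, f t * ((g (φ t) : ℝ) : ℂ) = 0 := by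
    intro g hg
    obtain ⟨C, hCb⟩ := hKcomp.exists_bound_of_continuousOn hφc
    have hmem : ∀ t ∈ K, φ t ∈ Set.Icc (-C) C := by
      intro t ht
      have := hCb t ht
      rw [Real.norm_eq_abs, abs_le] at this
      exact this
    have key : ∀ ε : ℝ, 0 < ε → ‖∫ t in K, f t * ((g (φ t) : ℝ) : ℂ)‖ ≤ 0 + ε := by
      intro ε hε
      set ε' := ε / (2 * π + 1) with hε'def
      have hε' : 0 < ε' := div_pos hε (by positivity)
      obtain ⟨p, hp⟩ := exists_polynomial_near_of_continuousOn (-C) C g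
        hg.continuousOn ε' hε'
      have hIg : IntegrableOn (fun t => f t * ((g (φ t) : ℝ) : ℂ)) K :=
        hintC _ (Complex.continuous_ofReal.comp_continuousOn (hg.comp_continuousOn hφc))
      have hIp : IntegrableOn (fun t => f t * ((p.eval (φ t) : ℝ) : ℂ)) K :=
        hintC _ (Complex.continuous_ofReal.comp_continuousOn
          (p.continuous.comp_continuousOn hφc))
      have heq : (∫ t in K, f t * ((g (φ t) : ℝ) : ℂ))
          = ∫ t in K, (f t * ((g (φ t) : ℝ) : ℂ) - f t * ((p.eval (φ t) : ℝ) : ℂ)) := by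
        rw [MeasureTheory.integral_sub hIg hIp, hB p, sub_zero]
      rw [heq]
      have hbound : ∀ t ∈ K,
          ‖f t * ((g (φ t) : ℝ) : ℂ) - f t * ((p.eval (φ t) : ℝ) : ℂ)‖ ≤ ε' := by
        intro t ht
        rw [← mul_sub, norm_mul, hfnorm, one_mul]
        have : ((g (φ t) : ℝ) : ℂ) - ((p.eval (φ t) : ℝ) : ℂ)
            = (((g (φ t) - p.eval (φ t) : ℝ)) : ℂ) := by push_cast; ring
        rw [this, Complex.norm_real, Real.norm_eq_abs, abs_sub_comm]
        exact (hp (φ t) (hmem t ht)).le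
      calc ‖∫ t in K, (f t * ((g (φ t) : ℝ) : ℂ) - f t * ((p.eval (φ t) : ℝ) : ℂ))‖
          ≤ ε' * (volume K).toReal :=
            norm_setIntegral_le_of_norm_le_const (hKcomp.measure_lt_top) hbound
        _ ≤ ε' * (2 * π + 1) := by
            apply mul_le_mul_of_nonneg_left _ hε'.le
            rw [hKdef, Real.volume_Icc, ENNReal.toReal_ofReal (by linarith)]
            linarith
        _ = ε := by rw [hε'def, div_mul_cancel₀ _ (by positivity)]
        _ = 0 + ε := by ring
    have : ‖∫ t in K, f t * ((g (φ t) : ℝ) : ℂ)‖ ≤ 0 :=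
      le_of_forall_pos_le_add key
    simpa using norm_le_zero_iff.mp this
  -- The target set
  set S : Set ℝ := {t ∈ K | a ≤ φ t ∧ φ t ≤ a + δ} with hSdef
  have hSeq : S = K ∩ φ ⁻¹' Set.Icc a (a + δ) := by
    ext t
    simp only [hSdef, Set.mem_setOf_eq, Set.mem_inter_iff, Set.mem_preimage, Set.mem_Icc]
  have hSm : MeasurableSet S := by
    rw [hSeq]
    exact (hφc.preimage_isClosed_of_isClosed isClosed_Icc isClosed_Icc).measurableSet
  have hSK : S ⊆ K := fun t ht => ht.1
  set J : Set ℝ := Set.Icc a (a + δ) with hJdef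
  have hJne : J.Nonempty := ⟨a, le_refl a, by linarith⟩
  -- approximating continuous functions
  set g : ℕ → ℝ → ℝ := fun k x => max 0 (1 - k * Metric.infDist x J) with hgdef
  have hgc : ∀ k, Continuous (g k) := fun k =>
    continuous_const.max (continuous_const.sub
      (continuous_const.mul (Metric.continuous_infDist_pt J)))
  have hg01 : ∀ k x, 0 ≤ g k x ∧ g k x ≤ 1 := by
    intro k x
    refine ⟨le_max_left _ _, max_le (by norm_num) ?_⟩
    have h1 : 0 ≤ (k : ℝ) * Metric.infDist x J :=
      mul_nonneg (Nat.cast_nonneg k) Metric.infDist_nonneg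
    linarith
  have hgmem : ∀ k x, x ∈ J → g k x = 1 := by
    intro k x hx
    simp [hgdef, Metric.infDist_zero_of_mem hx]
  have hgtend : ∀ x, x ∉ J →
      Filter.Tendsto (fun k : ℕ => g k x) Filter.atTop (nhds 0) := by
    intro x hx
    have hd : 0 < Metric.infDist x J :=
      (isClosed_Icc.notMem_iff_infDist_pos hJne).mp hx
    obtain ⟨N, hN⟩ := exists_nat_ge (1 / Metric.infDist x J)
    have : ∀ k ≥ N, g k x = 0 := by
      intro k hk
      have hk' : 1 / Metric.infDist x J ≤ (k : ℝ) :=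
        hN.trans (Nat.cast_le.mpr hk)
      have : 1 ≤ (k : ℝ) * Metric.infDist x J := by
        rw [div_le_iff₀ hd] at hk'
        linarith
      simp only [hgdef]
      exact max_eq_left (by linarith)
    exact tendsto_atTop_of_eventually_const this
  -- Dominated convergence
  have hmeas : ∀ k : ℕ, AEStronglyMeasurable (fun t => f t * ((g k (φ t) : ℝ) : ℂ))
      (volume.restrict K) :=
    fun k => ((hfc.mul (Complex.continuous_ofReal.comp_continuousOn
      ((hgc k).comp_continuousOn hφc))).aestronglyMeasurable hKm)
  have hbint : Integrable (fun _ : ℝ => (1 : ℝ)) (volume.restrict K) := by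
    rw [MeasureTheory.integrable_const_iff]
    right
    rw [isFiniteMeasure_iff, Measure.restrict_apply_univ]
    exact hKcomp.measure_lt_top
  have hbnd : ∀ k : ℕ, ∀ᵐ t ∂(volume.restrict K),
      ‖f t * ((g k (φ t) : ℝ) : ℂ)‖ ≤ 1 := by
    intro k
    filter_upwards with t
    rw [norm_mul, hfnorm, one_mul, Complex.norm_real, Real.norm_eq_abs,
      abs_of_nonneg (hg01 k (φ t)).1]
    exact (hg01 k (φ t)).2
  have hlim : ∀ᵐ t ∂(volume.restrict K), Filter.Tendsto
      (fun k : ℕ => f t * ((g k (φ t) : ℝ) : ℂ)) Filter.atTop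
      (nhds (S.indicator f t)) := by
    filter_upwards [ae_restrict_mem hKm] with t ht
    by_cases hφt : φ t ∈ J
    · have htS : t ∈ S := by
        rw [hSeq]; exact ⟨ht, hφt⟩
      rw [Set.indicator_of_mem htS]
      have : ∀ k : ℕ, f t * ((g k (φ t) : ℝ) : ℂ) = f t := by
        intro k; rw [hgmem k _ hφt]; simp
      simp_rw [this]
      exact tendsto_const_nhds
    · have htS : t ∉ S := by
        rw [hSeq]; exact fun hc => hφt hc.2
      rw [Set.indicator_of_notMem htS]
      have h1 : Filter.Tendsto (fun k : ℕ => ((g k (φ t) : ℝ) : ℂ)) Filter.atTop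
          (nhds 0) := by
        have := (Complex.continuous_ofReal.tendsto 0).comp (hgtend (φ t) hφt)
        simpa [Function.comp_def] using this
      have := h1.const_mul (f t)
      simpa using this
  have hDCT := MeasureTheory.tendsto_integral_of_dominated_convergence
    (μ := volume.restrict K) (F := fun k t => f t * ((g k (φ t) : ℝ) : ℂ))
    (f := S.indicator f) (fun _ => (1:ℝ)) hmeas hbint hbnd hlim
  have hzero : ∀ k : ℕ, ∫ t in K, f t * ((g k (φ t) : ℝ) : ℂ) = 0 :=
    fun k => hC (g k) (hgc k)
  simp_rw [hzero] at hDCT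
  have hind : ∫ t in K, S.indicator f t = 0 :=
    (tendsto_nhds_unique tendsto_const_nhds hDCT).symm
  rw [MeasureTheory.setIntegral_indicator hSm, Set.inter_eq_self_of_subset_right hSK] at hind
  exact hind
end

section
/- Let N ≥ 3 and let θ₂, …, θ_{N-1} ∈ ℝ and φ₂, …, φ_{N-1} ∈ ℝ. Then Σ_{j=2}^{N-1} exp(i(θⱼ + λφⱼ)) = -1 for all λ ∈ ℝ if and only if Σ_{j=2}^{N-1} exp(iθⱼ) = -1 and Σ_{j=2}^{N-1} exp(iθⱼ)·φⱼⁿ = 0 for all n ≥ 1. -/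
theorem stmt_8 (N : ℕ) (hN : 3 ≤ N) (θ φ : ℕ → ℝ) :
    (∀ l : ℝ, ∑ j ∈ Finset.Icc 2 (N - 1),
        Complex.exp (Complex.I * ((θ j : ℂ) + (l : ℂ) * (φ j : ℂ))) = -1) ↔
    ((∑ j ∈ Finset.Icc 2 (N - 1), Complex.exp (Complex.I * (θ j : ℂ)) = -1) ∧
      ∀ n : ℕ, 1 ≤ n →
        ∑ j ∈ Finset.Icc 2 (N - 1),
          Complex.exp (Complex.I * (θ j : ℂ)) * (φ j : ℂ) ^ n = 0) := by
  set S := Finset.Icc 2 (N - 1) with hS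
  constructor
  · intro h
    set F : ℕ → ℝ → ℂ := fun n l => ∑ j ∈ S,
      Complex.exp (Complex.I * (θ j : ℂ)) * (Complex.I * (φ j : ℂ)) ^ n *
        Complex.exp ((Complex.I * (φ j : ℂ)) * (l : ℂ)) with hFdef
    have hF0 : ∀ l : ℝ, F 0 l = -1 := by
      intro l
      rw [← h l, hFdef]
      refine Finset.sum_congr rfl fun j _ => ?_
      rw [pow_zero, mul_one, ← Complex.exp_add]
      ring_nf
    have hder : ∀ (n : ℕ) (l : ℝ), HasDerivAt (F n) (F (n + 1) l) l := by
      intro n l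
      rw [hFdef]
      refine HasDerivAt.fun_sum fun j _ => ?_
      have h1 : HasDerivAt (fun z : ℂ => Complex.exp ((Complex.I * (φ j : ℂ)) * z))
          (Complex.exp ((Complex.I * (φ j : ℂ)) * (l : ℂ)) * (Complex.I * (φ j : ℂ) * 1))
          ((l : ℝ) : ℂ) := ((hasDerivAt_id ((l : ℝ) : ℂ)).const_mul (Complex.I * (φ j : ℂ))).cexp
      have h2 := (h1.comp_ofReal).const_mul
        (Complex.exp (Complex.I * (θ j : ℂ)) * (Complex.I * (φ j : ℂ)) ^ n)
      convert h2 using 1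
      · rfl
      · ring
    have hFn : ∀ (n : ℕ) (l : ℝ), F (n + 1) l = 0 := by
      intro n
      induction n with
      | zero =>
        intro l
        have h2 : HasDerivAt (F 0) 0 l := by
          have : F 0 = fun _ : ℝ => (-1 : ℂ) := funext hF0
          rw [this]; exact hasDerivAt_const l (-1)
        exact (hder 0 l).unique h2
      | succ n ih =>
        intro l
        have h2 : HasDerivAt (F (n + 1)) 0 l := by
          have : F (n + 1) = fun _ : ℝ => (0 : ℂ) := funext ih
          rw [this]; exact hasDerivAt_const l 0
        exact (hder (n + 1) l).unique h2
    constructor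
    · have := h 0
      simpa using this
    · intro n hn
      obtain ⟨m, rfl⟩ := Nat.exists_eq_add_of_le hn
      have h0 := hFn m 0
      rw [hFdef] at h0
      simp only [Complex.ofReal_zero, mul_zero, Complex.exp_zero, mul_one] at h0
      have key : ∑ j ∈ S, Complex.exp (Complex.I * (θ j : ℂ)) * (Complex.I * (φ j : ℂ)) ^ (m + 1)
          = Complex.I ^ (m + 1) * ∑ j ∈ S, Complex.exp (Complex.I * (θ j : ℂ)) * (φ j : ℂ) ^ (m + 1) := by
        rw [Finset.mul_sum]
        refine Finset.sum_congr rfl fun j _ => ?_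
        rw [mul_pow]; ring
      rw [key] at h0
      have hI : (Complex.I : ℂ) ^ (m + 1) ≠ 0 := pow_ne_zero _ Complex.I_ne_zero
      have := mul_eq_zero.mp h0
      rcases this with h | h
      · exact absurd h hI
      · rw [show 1 + m = m + 1 by ring]; exact h
  · rintro ⟨h0, hn⟩ l
    have step1 : ∀ j ∈ S, Complex.exp (Complex.I * ((θ j : ℂ) + (l : ℂ) * (φ j : ℂ)))
        = ∑' n : ℕ, Complex.exp (Complex.I * (θ j : ℂ)) *
            ((Complex.I * (l : ℂ)) ^ n * (φ j : ℂ) ^ n / n.factorial) := by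
      intro j _
      have : Complex.I * ((θ j : ℂ) + (l : ℂ) * (φ j : ℂ))
          = Complex.I * (θ j : ℂ) + Complex.I * (l : ℂ) * (φ j : ℂ) := by ring
      rw [this, Complex.exp_add]
      have hexp : Complex.exp (Complex.I * (l : ℂ) * (φ j : ℂ))
          = ∑' n : ℕ, (Complex.I * (l : ℂ) * (φ j : ℂ)) ^ n / n.factorial := by
        rw [Complex.exp_eq_exp_ℂ, NormedSpace.exp_eq_tsum_div]
      rw [hexp, ← tsum_mul_left]
      congr 1; funext n; rw [mul_pow]
    rw [Finset.sum_congr rfl step1, ← Summable.tsum_finsetSum]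
    · have hterm : ∀ n : ℕ, (∑ j ∈ S, Complex.exp (Complex.I * (θ j : ℂ)) *
          ((Complex.I * (l : ℂ)) ^ n * (φ j : ℂ) ^ n / n.factorial))
          = (Complex.I * (l : ℂ)) ^ n / n.factorial *
            ∑ j ∈ S, Complex.exp (Complex.I * (θ j : ℂ)) * (φ j : ℂ) ^ n := by
        intro n
        rw [Finset.mul_sum]
        refine Finset.sum_congr rfl fun j _ => ?_
        ring
      calc (∑' n : ℕ, ∑ j ∈ S, Complex.exp (Complex.I * (θ j : ℂ)) *
              ((Complex.I * (l : ℂ)) ^ n * (φ j : ℂ) ^ n / n.factorial))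
          = ∑' n : ℕ, (Complex.I * (l : ℂ)) ^ n / n.factorial *
              ∑ j ∈ S, Complex.exp (Complex.I * (θ j : ℂ)) * (φ j : ℂ) ^ n := by
            congr 1; funext n; exact hterm n
        _ = -1 := by
            rw [tsum_eq_single 0]
            · simp [h0]
            · intro n hne
              rw [hn n (Nat.one_le_iff_ne_zero.mpr hne), mul_zero]
    · intro j hj
      have hs : Summable fun n : ℕ => (Complex.I * (l : ℂ) * (φ j : ℂ)) ^ n / n.factorial :=
        NormedSpace.expSeries_div_summable _
      have hs2 := hs.mul_left (Complex.exp (Complex.I * (θ j : ℂ)))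
      refine hs2.congr fun n => ?_
      rw [mul_pow]
end

section
/- Let J be a finite index set, θ : J → ℝ, φ : J → ℝ. The following are equivalent: (1) Σ_{j∈J} exp(i(θⱼ + λφⱼ)) = Σ_{j∈J} exp(iθⱼ) for all λ ∈ ℝ; (2) Σ_{j∈J} exp(iθⱼ)·φⱼⁿ = 0 for all n ≥ 1; (3) for every a ≠ 0, Σ_{j∈J, φⱼ=a} exp(iθⱼ) = 0. -/
open Complex Finset Polynomial

lemma aux_hasDerivAt {J : Type*} [Fintype J] (c a : J → ℂ) (x : ℝ) :
    HasDerivAt (fun l : ℝ => ∑ j : J, c j * Complex.exp (a j * l))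
      (∑ j : J, (c j * a j) * Complex.exp (a j * x)) x := by
  apply HasDerivAt.fun_sum
  intro j _
  have h1 : HasDerivAt (fun l : ℝ => (l : ℂ)) 1 x := by
    exact (Complex.ofRealCLM.hasDerivAt (x := x))
  have h2 : HasDerivAt (fun l : ℝ => a j * (l : ℂ)) (a j) x := by
    simpa using h1.const_mul (a j)
  have h4 := h2.cexp.const_mul (c j)
  convert h4 using 1
  · rfl
  ring

lemma aux_moments {J : Type*} [Fintype J] (c a : J → ℂ)
    (h : ∀ l : ℝ, ∑ j : J, c j * Complex.exp (a j * l) = ∑ j : J, c j * Complex.exp (a j * (0:ℝ))) :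
    ∀ n : ℕ, 1 ≤ n → ∀ x : ℝ, ∑ j : J, (c j * a j ^ n) * Complex.exp (a j * x) = 0 := by
  intro n hn
  induction n with
  | zero => omega
  | succ m ih =>
    rcases Nat.eq_or_lt_of_le hn with h1 | h1
    · -- m = 0, n = 1
      have hm : m = 0 := by omega
      subst hm
      intro x
      have hd := aux_hasDerivAt c a x
      have hfun : (fun l : ℝ => ∑ j : J, c j * Complex.exp (a j * l))
          = fun _ : ℝ => ∑ j : J, c j * Complex.exp (a j * (0:ℝ)) := funext h
      rw [hfun] at hd
      have h0 := hasDerivAt_const (𝕜 := ℝ) x (∑ j : J, c j * Complex.exp (a j * (0:ℝ)))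
      have := hd.unique h0
      simpa [pow_one] using this
    · have hm : 1 ≤ m := by omega
      intro x
      have hd := aux_hasDerivAt (fun j => c j * a j ^ m) a x
      have hfun : (fun l : ℝ => ∑ j : J, (c j * a j ^ m) * Complex.exp (a j * l))
          = fun _ : ℝ => (0 : ℂ) := funext (ih hm)
      rw [hfun] at hd
      have h0 := hasDerivAt_const (𝕜 := ℝ) x (0 : ℂ)
      have := hd.unique h0
      calc ∑ j : J, (c j * a j ^ (m+1)) * Complex.exp (a j * x)
          = ∑ j : J, (c j * a j ^ m * a j) * Complex.exp (a j * x) := by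
            refine Finset.sum_congr rfl fun j _ => by ring
        _ = 0 := this

theorem stmt_11 {J : Type*} [Fintype J] (θ φ : J → ℝ) :
    List.TFAE [
      (∀ l : ℝ, ∑ j : J, Complex.exp (Complex.I * ((θ j : ℂ) + (l : ℂ) * (φ j : ℂ)))
          = ∑ j : J, Complex.exp (Complex.I * (θ j : ℂ))),
      (∀ n : ℕ, 1 ≤ n →
        ∑ j : J, Complex.exp (Complex.I * (θ j : ℂ)) * (φ j : ℂ) ^ n = 0),
      (∀ a : ℝ, a ≠ 0 →
        ∑ j ∈ Finset.univ.filter (fun j => φ j = a),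
          Complex.exp (Complex.I * (θ j : ℂ)) = 0)] := by
  set c : J → ℂ := fun j => Complex.exp (Complex.I * (θ j : ℂ)) with hc
  tfae_have 1 → 2
  · intro h1 n hn
    set a : J → ℂ := fun j => Complex.I * (φ j : ℂ) with ha
    have h' : ∀ l : ℝ, ∑ j : J, c j * Complex.exp (a j * l)
        = ∑ j : J, c j * Complex.exp (a j * (0:ℝ)) := by
      intro l
      have e : ∀ l : ℝ, ∀ j : J,
          c j * Complex.exp (a j * l)
            = Complex.exp (Complex.I * ((θ j : ℂ) + (l : ℂ) * (φ j : ℂ))) := by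
        intro l j
        rw [hc, ha, ← Complex.exp_add]
        ring_nf
      rw [Finset.sum_congr rfl (fun j _ => e l j),
        Finset.sum_congr rfl (fun j _ => e 0 j), h1 l, h1 0]
    have := aux_moments c a h' n hn 0
    simp only [Complex.ofReal_zero, mul_zero, Complex.exp_zero, mul_one] at this
    have e2 : ∑ j : J, c j * a j ^ n = Complex.I ^ n * ∑ j : J, c j * (φ j : ℂ) ^ n := by
      rw [Finset.mul_sum]
      refine Finset.sum_congr rfl fun j _ => by rw [ha]; ring
    rw [e2] at this
    exact (mul_eq_zero.mp this).resolve_left (pow_ne_zero n Complex.I_ne_zero)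
  tfae_have 2 → 3
  · intro h2 a ha
    set ψ : J → ℂ := fun j => (φ j : ℂ) with hψ
    set α : ℂ := (a : ℂ) with hα
    set B := (Finset.univ.image ψ).erase α with hB
    set p : Polynomial ℂ := Polynomial.X * ∏ b ∈ B, (Polynomial.X - Polynomial.C b) with hp
    have hev : ∀ z : ℂ, p.eval z = z * ∏ b ∈ B, (z - b) := by
      intro z; simp [hp, Polynomial.eval_prod]
    have key : ∑ j : J, c j * p.eval (ψ j) = 0 := by
      have e1 : ∀ j : J, c j * p.eval (ψ j)
          = ∑ i ∈ Finset.range (p.natDegree + 1), p.coeff i * (c j * ψ j ^ i) := by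
        intro j
        rw [Polynomial.eval_eq_sum_range, Finset.mul_sum]
        exact Finset.sum_congr rfl fun i _ => by ring
      rw [Finset.sum_congr rfl fun j _ => e1 j, Finset.sum_comm]
      refine Finset.sum_eq_zero fun i _ => ?_
      rw [← Finset.mul_sum]
      rcases Nat.eq_zero_or_pos i with hi | hi
      · subst hi
        have : p.coeff 0 = 0 := by
          rw [Polynomial.coeff_zero_eq_eval_zero, hev]; simp
        rw [this, zero_mul]
      · rw [h2 i hi, mul_zero]
    have split : ∑ j : J, c j * p.eval (ψ j)
        = (∑ j ∈ Finset.univ.filter (fun j => φ j = a), c j) * p.eval α := by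
      rw [← Finset.sum_filter_add_sum_filter_not Finset.univ (fun j => φ j = a)]
      have t1 : ∑ j ∈ Finset.univ.filter (fun j => φ j = a), c j * p.eval (ψ j)
          = (∑ j ∈ Finset.univ.filter (fun j => φ j = a), c j) * p.eval α := by
        rw [Finset.sum_mul]
        refine Finset.sum_congr rfl fun j hj => ?_
        have : φ j = a := (Finset.mem_filter.mp hj).2
        rw [hψ, hα]; simp [this]
      have t2 : ∑ j ∈ Finset.univ.filter (fun j => ¬ φ j = a), c j * p.eval (ψ j) = 0 := by
        refine Finset.sum_eq_zero fun j hj => ?_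
        have hne : φ j ≠ a := (Finset.mem_filter.mp hj).2
        have hne' : ψ j ≠ α := by
          simp only [hψ, hα, Ne, Complex.ofReal_inj]; exact hne
        have hmem : ψ j ∈ B := Finset.mem_erase.mpr
          ⟨hne', Finset.mem_image_of_mem ψ (Finset.mem_univ j)⟩
        have : p.eval (ψ j) = 0 := by
          rw [hev]
          rw [Finset.prod_eq_zero hmem (sub_self _), mul_zero]
        rw [this, mul_zero]
      rw [t1, t2, add_zero]
    have hne0 : p.eval α ≠ 0 := by
      rw [hev]
      refine mul_ne_zero (by simp only [hα, Ne, Complex.ofReal_eq_zero]; exact ha) ?_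
      rw [Finset.prod_ne_zero_iff]
      intro b hb
      have : b ≠ α := (Finset.mem_erase.mp hb).1
      exact sub_ne_zero.mpr (Ne.symm this)
    have := key ▸ split.symm ▸ key
    rw [split] at key
    exact (mul_eq_zero.mp key).resolve_right hne0
  tfae_have 3 → 1
  · intro h3 l
    have maps : ∀ j ∈ (Finset.univ : Finset J), φ j ∈ Finset.univ.image φ :=
      fun j _ => Finset.mem_image_of_mem φ (Finset.mem_univ j)
    rw [← Finset.sum_fiberwise_of_maps_to maps
        (fun j => Complex.exp (Complex.I * ((θ j : ℂ) + (l : ℂ) * (φ j : ℂ)))),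
      ← Finset.sum_fiberwise_of_maps_to maps
        (fun j => Complex.exp (Complex.I * (θ j : ℂ)))]
    refine Finset.sum_congr rfl fun a _ => ?_
    rcases eq_or_ne a 0 with rfl | ha
    · refine Finset.sum_congr rfl fun j hj => ?_
      have : φ j = 0 := (Finset.mem_filter.mp hj).2
      rw [this]; norm_num
    · have e : ∀ j ∈ Finset.univ.filter (fun j => φ j = a),
          Complex.exp (Complex.I * ((θ j : ℂ) + (l : ℂ) * (φ j : ℂ)))
            = Complex.exp (Complex.I * ((l : ℂ) * (a : ℂ))) * c j := by
        intro j hj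
        have : φ j = a := (Finset.mem_filter.mp hj).2
        rw [hc, this, ← Complex.exp_add]
        ring_nf
      rw [Finset.sum_congr rfl e, ← Finset.mul_sum, h3 a ha, mul_zero]
  tfae_finish
end

section
/- Let n ≥ 1, and consider in ℂ the multiset of 2n+1 unit vectors consisting of n copies each of u and v, where u, v are unit vectors with u + v = (1/n, 0) (i.e. u = 1/(2n) + i·√(1 - 1/(4n²)) and v its conjugate), together with the vector w = -1. The total sum is 0, but no nonempty proper sub-multiset of these 2n+1 vectors has sum 0. -/
open Real

theorem stmt_15 (n : ℕ) (hn : 1 ≤ n)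
    (u v w : ℂ)
    (hu : u = (1 / (2 * n) : ℝ) + Complex.I * (Real.sqrt (1 - 1 / (4 * n ^ 2)) : ℝ))
    (hv : v = (starRingEnd ℂ) u)
    (hw : w = -1)
    (S : Multiset ℂ)
    (hS : S = Multiset.replicate n u + Multiset.replicate n v + {w}) :
    S.sum = 0 ∧
      ∀ T : Multiset ℂ, T ≤ S → T ≠ 0 → T ≠ S → T.sum ≠ 0 := by
  have hn' : (1:ℝ) ≤ (n:ℝ) := by exact_mod_cast hn
  have hnpos : (0:ℝ) < n := by linarith
  set y := Real.sqrt (1 - 1 / (4 * (n:ℝ) ^ 2)) with hy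
  have hyarg : (0:ℝ) < 1 - 1 / (4 * (n:ℝ) ^ 2) := by
    have h1 : (1:ℝ) ≤ (n:ℝ)^2 := by nlinarith
    have h2 : 1 / (4 * (n:ℝ)^2) ≤ 1/4 := by
      apply div_le_div_of_nonneg_left (by norm_num) (by norm_num) ?_
      nlinarith
    linarith
  have hypos : 0 < y := Real.sqrt_pos.mpr hyarg
  have hure : u.re = 1 / (2 * (n:ℝ)) := by simp [hu]
  have huim : u.im = y := by simp [hu, hy]
  have hvre : v.re = 1 / (2 * (n:ℝ)) := by simp [hv, hure]
  have hvim : v.im = -y := by simp [hv, huim]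
  have huv : u ≠ v := by
    intro h
    rw [Complex.ext_iff] at h
    rw [huim, hvim] at h
    linarith [h.2]
  have huw : u ≠ w := by
    intro h
    rw [hw, Complex.ext_iff] at h
    simp [huim] at h
    linarith [h.2]
  have hvw : v ≠ w := by
    intro h
    rw [hw, Complex.ext_iff] at h
    simp [hvim] at h
    linarith [h.2]
  have hsum : u + v = ((1:ℂ)/n) := by
    apply Complex.ext
    · simp [hure, hvre]
      field_simp
      ring
    · simp [huim, hvim]
  have hne : (n:ℂ) ≠ 0 := by exact_mod_cast hnpos.ne'
  have hSsum : S.sum = 0 := by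
    rw [hS]
    simp only [Multiset.sum_add, Multiset.sum_replicate, Multiset.sum_singleton, hw,
      nsmul_eq_mul]
    rw [show ((n:ℂ) * u + (n:ℂ) * v : ℂ) = (n:ℂ) * (u + v) by ring, hsum]
    field_simp
    norm_num
  refine ⟨hSsum, ?_⟩
  intro T hT hT0 hTS hTsum
  obtain ⟨a, ha⟩ : ∃ a, Multiset.count u T = a := ⟨_, rfl⟩
  obtain ⟨b, hb⟩ : ∃ b, Multiset.count v T = b := ⟨_, rfl⟩
  obtain ⟨c, hc⟩ : ∃ c, Multiset.count w T = c := ⟨_, rfl⟩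
  have hcount := fun x => Multiset.le_iff_count.mp hT x
  have hcu : Multiset.count u S = n := by
    rw [hS]
    simp [Multiset.count_replicate, huv, huw, Ne.symm huv, Ne.symm huw]
  have hcv : Multiset.count v S = n := by
    rw [hS]
    simp [Multiset.count_replicate, Ne.symm huv, hvw, huv, Ne.symm hvw]
  have hcw : Multiset.count w S = 1 := by
    rw [hS]
    simp [Multiset.count_replicate, Ne.symm huw, Ne.symm hvw, huw, hvw]
  have hale : a ≤ n := by rw [← ha, ← hcu]; exact hcount u
  have hble : b ≤ n := by rw [← hb, ← hcv]; exact hcount v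
  have hcle : c ≤ 1 := by rw [← hc, ← hcw]; exact hcount w
  have hTeq : T = Multiset.replicate a u + Multiset.replicate b v + Multiset.replicate c w := by
    ext x
    simp only [Multiset.count_add, Multiset.count_replicate]
    by_cases hxu : x = u
    · subst hxu
      simp [Ne.symm huv, Ne.symm huw, huv, huw, ha]
    · by_cases hxv : x = v
      · subst hxv
        simp [huv, Ne.symm hvw, Ne.symm huv, hvw, hb]
      · by_cases hxw : x = w
        · subst hxw
          simp [huw, hvw, Ne.symm huw, Ne.symm hvw, hc]
        · have hux : ¬ u = x := fun h => hxu h.symm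
          have hvx : ¬ v = x := fun h => hxv h.symm
          have hwx : ¬ w = x := fun h => hxw h.symm
          have hxS : Multiset.count x S = 0 := by
            rw [hS]
            simp only [Multiset.count_add, Multiset.count_replicate,
              Multiset.count_singleton, if_neg hux, if_neg hvx, if_neg hxw]
          have := hcount x
          rw [hxS] at this
          rw [if_neg hux, if_neg hvx, if_neg hwx, Nat.le_zero.mp this]
  have hTsum' : (a:ℂ) * u + (b:ℂ) * v + (c:ℂ) * w = 0 := by
    rw [hTeq] at hTsum
    simpa [Multiset.sum_replicate, nsmul_eq_mul] using hTsum
  have him : (a:ℝ) * y + (b:ℝ) * (-y) = 0 := by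
    have := congrArg Complex.im hTsum'
    simpa [Complex.add_im, Complex.mul_im, huim, hvim, hw] using this
  have hab : a = b := by
    have h1 : (a:ℝ) * y = (b:ℝ) * y := by linarith
    have h2 : (a:ℝ) = b := mul_right_cancel₀ hypos.ne' h1
    exact_mod_cast h2
  have hre : (a:ℝ) * (1/(2*(n:ℝ))) + (b:ℝ) * (1/(2*(n:ℝ))) - c = 0 := by
    have := congrArg Complex.re hTsum'
    simpa [Complex.add_re, Complex.mul_re, hure, hvre, huim, hvim, hw, sub_eq_add_neg] using this
  subst hab
  rcases Nat.le_one_iff_eq_zero_or_eq_one.mp hcle with hc0 | hc1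
  · subst hc0
    have ha0 : a = 0 := by
      by_contra ha0
      have h1 : (1:ℝ) ≤ a := by exact_mod_cast Nat.one_le_iff_ne_zero.mpr ha0
      have h2 : (0:ℝ) < 1/(2*(n:ℝ)) := by positivity
      simp only [Nat.cast_zero] at hre
      nlinarith
    apply hT0
    rw [hTeq, ha0]
    simp
  · subst hc1
    have han : a = n := by
      have h2 : (a:ℝ) = n := by
        have hnne : (n:ℝ) ≠ 0 := hnpos.ne'
        field_simp at hre
        push_cast at hre
        linarith
      exact_mod_cast h2
    apply hTS
    rw [hTeq, han, hS]
    simp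
end

section
/- Let θ, φ : [0,2π] → ℝ with φ continuously differentiable, and suppose ∫_{φ^{-1}([a, a+δ])} exp(iθ(t)) dt = 0 for all δ ≥ 0 and a fixed regular value a of φ with a ∉ {φ(0), φ(2π)}, where φ^{-1}(a) = {b₁, …, b_m} is finite and φ'(bⱼ) ≠ 0 for each j. Then Σ_{j=1}^m exp(iθ(bⱼ)) / |φ'(bⱼ)| = 0. -/
open Real MeasureTheory Filter
open scoped Topology

theorem stmt_16 (θ φ : ℝ → ℝ)
    (hθ : ContinuousOn θ (Set.Icc 0 (2 * π)))
    (hφ : ContDiffOn ℝ 1 φ (Set.Icc 0 (2 * π)))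
    (a : ℝ) (ha0 : a ≠ φ 0) (ha2 : a ≠ φ (2 * π))
    (m : ℕ) (b : Fin m → ℝ) (hbinj : Function.Injective b)
    (hpre : {t ∈ Set.Icc 0 (2 * π) | φ t = a} = Set.range b)
    (hreg : ∀ j : Fin m, deriv φ (b j) ≠ 0)
    (hint : ∀ δ : ℝ, 0 ≤ δ →
      ∫ t in {t ∈ Set.Icc 0 (2 * π) | a ≤ φ t ∧ φ t ≤ a + δ},
        Complex.exp (Complex.I * (θ t : ℂ)) = 0) :
    ∑ j : Fin m, Complex.exp (Complex.I * (θ (b j) : ℂ)) / ((|deriv φ (b j)| : ℝ) : ℂ) = 0 := by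
  classical
  rcases Nat.eq_zero_or_pos m with hm0 | hm0
  · subst hm0; simp
  have hπ : (0:ℝ) < 2 * π := by positivity
  set f : ℝ → ℂ := fun t => Complex.exp (Complex.I * (θ t : ℂ)) with hfdef
  have hbmem : ∀ j, b j ∈ Set.Icc (0:ℝ) (2*π) ∧ φ (b j) = a := by
    intro j
    have h : b j ∈ {t ∈ Set.Icc (0:ℝ) (2*π) | φ t = a} := by
      rw [hpre]; exact Set.mem_range_self j
    exact ⟨h.1, h.2⟩
  have hbI : ∀ j, b j ∈ Set.Ioo (0:ℝ) (2*π) := by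
    intro j
    obtain ⟨⟨h0, h2⟩, hab⟩ := hbmem j
    constructor
    · rcases h0.lt_or_eq with h | h
      · exact h
      · exact absurd (h ▸ hab : φ 0 = a) (fun hh => ha0 hh.symm)
    · rcases h2.lt_or_eq with h | h
      · exact h
      · exact absurd (h ▸ hab : φ (2*π) = a) (fun hh => ha2 hh.symm)
  have hnb : ∀ j, Set.Icc (0:ℝ) (2*π) ∈ 𝓝 (b j) := fun j =>
    Icc_mem_nhds (hbI j).1 (hbI j).2
  have hfc : ContinuousOn f (Set.Icc (0:ℝ) (2*π)) := by
    apply Complex.continuous_exp.comp_continuousOn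
    exact continuousOn_const.mul (Complex.continuous_ofReal.comp_continuousOn hθ)
  -- continuity of deriv at b j
  have hdW : ContinuousOn (derivWithin φ (Set.Icc 0 (2*π))) (Set.Icc (0:ℝ) (2*π)) :=
    hφ.continuousOn_derivWithin (uniqueDiffOn_Icc hπ) le_rfl
  have hdc : ∀ j, ContinuousAt (deriv φ) (b j) := by
    intro j
    have h1 : ContinuousAt (derivWithin φ (Set.Icc 0 (2*π))) (b j) :=
      hdW.continuousAt (hnb j)
    apply h1.congr
    filter_upwards [isOpen_Ioo.mem_nhds (hbI j)] with t ht
    exact derivWithin_of_mem_nhds (f := φ) (Icc_mem_nhds ht.1 ht.2)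
  -- small radius around each b j
  have hr : ∀ j, ∃ r > (0:ℝ), Set.Icc (b j - r) (b j + r) ⊆ Set.Ioo (0:ℝ) (2*π) ∧
      ∀ t ∈ Set.Icc (b j - r) (b j + r), 0 < deriv φ (b j) * deriv φ t := by
    intro j
    have hc : ContinuousAt (fun t => deriv φ (b j) * deriv φ t) (b j) :=
      continuousAt_const.mul (hdc j)
    have hpos : (0:ℝ) < deriv φ (b j) * deriv φ (b j) := mul_self_pos.2 (hreg j)
    have h1 : ∀ᶠ t in 𝓝 (b j), 0 < deriv φ (b j) * deriv φ t :=
      hc.eventually_mem (Ioi_mem_nhds hpos)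
    have h2 : ∀ᶠ t in 𝓝 (b j), t ∈ Set.Ioo (0:ℝ) (2*π) :=
      isOpen_Ioo.mem_nhds (hbI j)
    obtain ⟨r, hr0, hball⟩ := Metric.mem_nhds_iff.1 (h1.and h2)
    refine ⟨r/2, by positivity, ?_, ?_⟩
    · intro t ht
      have : t ∈ Metric.ball (b j) r := by
        rw [Metric.mem_ball, Real.dist_eq, abs_lt]
        rw [Set.mem_Icc] at ht
        constructor <;> linarith
      exact (hball this).2
    · intro t ht
      have : t ∈ Metric.ball (b j) r := by
        rw [Metric.mem_ball, Real.dist_eq, abs_lt]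
        rw [Set.mem_Icc] at ht
        constructor <;> linarith
      exact (hball this).1
  choose r hr0 hsub hsign using hr
  -- global ε
  have hεex : ∃ ε : ℝ, 0 < ε ∧ (∀ j, ε ≤ r j) ∧
      ∀ i j : Fin m, i ≠ j → 3 * ε ≤ |b i - b j| := by
    have h1 : ∀ᶠ ε in 𝓝[>] (0:ℝ), ∀ j, ε ≤ r j :=
      eventually_all.2 fun j =>
        eventually_nhdsWithin_of_eventually_nhds (eventually_le_nhds (hr0 j))
    have h2 : ∀ᶠ ε in 𝓝[>] (0:ℝ), ∀ i j : Fin m, i ≠ j → 3 * ε ≤ |b i - b j| := by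
      refine eventually_all.2 fun i => eventually_all.2 fun j => ?_
      by_cases hij : i = j
      · filter_upwards with ε h; exact absurd hij h
      · have hne : b i ≠ b j := fun h => hij (hbinj h)
        have hpos : (0:ℝ) < |b i - b j| / 3 := by
          have : |b i - b j| > 0 := abs_pos.2 (sub_ne_zero.2 hne)
          linarith
        filter_upwards [eventually_nhdsWithin_of_eventually_nhds
          (eventually_le_nhds hpos)] with ε hε _
        linarith
    obtain ⟨ε, hε⟩ := (h1.and (h2.and self_mem_nhdsWithin)).exists
    exact ⟨ε, hε.2.2, hε.1, hε.2.1⟩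
  obtain ⟨ε, hε0, hεr, hsep⟩ := hεex
  have hIsub : ∀ j, Set.Icc (b j - ε) (b j + ε) ⊆ Set.Ioo (0:ℝ) (2*π) := by
    intro j
    refine (Set.Icc_subset_Icc ?_ ?_).trans (hsub j) <;> have := hεr j <;> linarith
  have hIsign : ∀ j, ∀ t ∈ Set.Icc (b j - ε) (b j + ε), 0 < deriv φ (b j) * deriv φ t := by
    intro j t ht
    refine hsign j t ?_
    rw [Set.mem_Icc] at ht ⊢
    have := hεr j
    constructor <;> linarith
  have hdisj : Pairwise (Function.onFun Disjoint fun j => Set.Icc (b j - ε) (b j + ε)) := by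
    intro i j hij
    refine Set.disjoint_left.2 fun t hti htj => ?_
    have hs := hsep i j hij
    rw [Set.mem_Icc] at hti htj
    have h1 : |b i - b j| ≤ 2 * ε := by
      rw [abs_le]; constructor <;> linarith
    linarith
  -- compactness: away from the b j, φ is far from a
  have hK : ∃ δ₀ > (0:ℝ), ∀ t ∈ Set.Icc (0:ℝ) (2*π),
      (∀ j, t ∉ Set.Ioo (b j - ε) (b j + ε)) → δ₀ ≤ |φ t - a| := by
    set K := Set.Icc (0:ℝ) (2*π) \ ⋃ j, Set.Ioo (b j - ε) (b j + ε) with hKdef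
    have hKc : IsCompact K := isCompact_Icc.diff (isOpen_iUnion fun j => isOpen_Ioo)
    have him : IsCompact (φ '' K) :=
      hKc.image_of_continuousOn (hφ.continuousOn.mono Set.diff_subset)
    have hanot : a ∉ φ '' K := by
      rintro ⟨t, htK, hta⟩
      have hmem : t ∈ Set.range b := by rw [← hpre]; exact ⟨htK.1, hta⟩
      obtain ⟨j, rfl⟩ := hmem
      exact htK.2 (Set.mem_iUnion.2 ⟨j, by constructor <;> linarith⟩)
    have hopen : (φ '' K)ᶜ ∈ 𝓝 a := him.isClosed.isOpen_compl.mem_nhds hanot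
    obtain ⟨δ₀, hδ₀, hball⟩ := Metric.mem_nhds_iff.1 hopen
    refine ⟨δ₀ / 2, by positivity, fun t ht htn => ?_⟩
    by_contra hlt
    push_neg at hlt
    have hmem : φ t ∈ Metric.ball a δ₀ := by
      rw [Metric.mem_ball, Real.dist_eq]
      have := abs_nonneg (φ t - a); linarith
    exact hball hmem ⟨t, ⟨ht, by simpa using htn⟩, rfl⟩
  obtain ⟨δ₀, hδ₀pos, hδ₀⟩ := hK
  -- per-point local analysis
  have main : ∀ j : Fin m, ∃ c : ℝ → ℝ,
      (∀ᶠ δ in 𝓝[>] (0:ℝ),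
        ({t ∈ Set.Ioo (b j - ε) (b j + ε) | a ≤ φ t ∧ φ t ≤ a + δ} = Set.uIcc (b j) (c δ) ∧
          c δ ∈ Set.Ioo (b j - ε) (b j + ε))) ∧
      Tendsto (fun δ : ℝ => δ⁻¹ • ∫ t in Set.uIcc (b j) (c δ), f t) (𝓝[>] 0)
        (𝓝 (f (b j) / ((|deriv φ (b j)| : ℝ) : ℂ))) := by
    intro j
    have hεrj := hεr j
    set B := b j with hB
    set d := deriv φ (b j) with hd
    have hd0 : d ≠ 0 := hreg j
    have hBIcc : B ∈ Set.Icc (B - ε) (B + ε) := ⟨by linarith, by linarith⟩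
    have hBIoo : B ∈ Set.Ioo (B - ε) (B + ε) := ⟨by linarith, by linarith⟩
    have hφB : φ B = a := (hbmem j).2
    have hstrict : HasStrictDerivAt φ d B :=
      (hφ.contDiffAt (hnb j)).hasStrictDerivAt one_ne_zero
    set ψ : ℝ → ℝ := hstrict.localInverse φ d B hd0 with hψdef
    have hψa : ψ a = B := by
      rw [← hφB]
      exact (hstrict.hasStrictFDerivAt_equiv hd0).localInverse_apply_image
    have hψd : HasStrictDerivAt ψ d⁻¹ a := by
      rw [← hφB]; exact hstrict.to_localInverse hd0
    have hψcont : ContinuousAt ψ a := hψd.hasDerivAt.continuousAt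
    have hψinv : ∀ᶠ y in 𝓝 a, φ (ψ y) = y := by
      rw [← hφB]
      exact (hstrict.hasStrictFDerivAt_equiv hd0).eventually_right_inverse
    set c : ℝ → ℝ := fun δ => ψ (a + δ) with hcdef
    have htend : Tendsto (fun δ : ℝ => a + δ) (𝓝[>] (0:ℝ)) (𝓝 a) := by
      have h1 : Tendsto (fun δ : ℝ => a + δ) (𝓝 0) (𝓝 (a + 0)) :=
        tendsto_const_nhds.add tendsto_id
      rw [add_zero] at h1
      exact h1.mono_left nhdsWithin_le_nhds
    have hcI : ∀ᶠ δ in 𝓝[>] (0:ℝ), c δ ∈ Set.Ioo (B - ε) (B + ε) := by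
      have h := hψcont.eventually_mem (isOpen_Ioo.mem_nhds
        (show ψ a ∈ Set.Ioo (B - ε) (B + ε) by rw [hψa]; exact hBIoo))
      exact htend.eventually h
    have hcinv : ∀ᶠ δ in 𝓝[>] (0:ℝ), φ (c δ) = a + δ := htend.eventually hψinv
    have hfint : IntervalIntegrable f volume B B := by
      apply ContinuousOn.intervalIntegrable
      refine hfc.mono ?_
      rw [Set.uIcc_self]
      exact Set.singleton_subset_iff.2 (hbmem j).1
    have hmeasat : StronglyMeasurableAtFilter f (𝓝 B) :=
      ⟨Set.Icc 0 (2*π), hnb j, hfc.aestronglyMeasurable measurableSet_Icc⟩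
    have hfcB : ContinuousAt f B := hfc.continuousAt (hnb j)
    have hHd : HasDerivAt (fun x => ∫ t in B..x, f t) (f B) B :=
      intervalIntegral.integral_hasDerivAt_right hfint hmeasat hfcB
    have hcd : HasDerivAt (fun δ : ℝ => ψ (a + δ)) d⁻¹ 0 := by
      have h1 : HasDerivAt (fun δ : ℝ => a + δ) 1 0 := by
        simpa using (hasDerivAt_id (0:ℝ)).const_add a
      have h2 : HasDerivAt ψ d⁻¹ ((fun δ : ℝ => a + δ) 0) := by
        simpa using hψd.hasDerivAt
      simpa [Function.comp_def] using h2.comp 0 h1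
    have hΦd : HasDerivAt (fun δ : ℝ => ∫ t in B..(ψ (a + δ)), f t) (d⁻¹ • f B) 0 := by
      have h2 : HasDerivAt (fun x => ∫ t in B..x, f t) (f B) ((fun δ : ℝ => ψ (a + δ)) 0) := by
        simpa [hψa] using hHd
      simpa [Function.comp_def] using h2.scomp 0 hcd
    have hΦ0 : (∫ t in B..(ψ (a + 0)), f t) = 0 := by
      rw [add_zero, hψa, intervalIntegral.integral_same]
    have hslope : Tendsto (fun δ : ℝ => δ⁻¹ • ∫ t in B..(ψ (a + δ)), f t) (𝓝[>] (0:ℝ))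
        (𝓝 (d⁻¹ • f B)) := by
      have h1 := hasDerivAt_iff_tendsto_slope.1 hΦd
      have h2 : 𝓝[>] (0:ℝ) ≤ 𝓝[≠] (0:ℝ) :=
        nhdsWithin_mono 0 fun x hx => ne_of_gt hx
      refine Tendsto.congr' ?_ (h1.mono_left h2)
      filter_upwards [self_mem_nhdsWithin] with δ (hδ : (0:ℝ) < δ)
      rw [slope_def_module, hΦ0, sub_zero, sub_zero]
    have hdC : ((d:ℝ) : ℂ) ≠ 0 := Complex.ofReal_ne_zero.mpr hd0
    rcases hd0.lt_or_gt with hneg | hpos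
    · -- d < 0 : φ strictly decreasing near B
      have hanti : StrictAntiOn φ (Set.Icc (B - ε) (B + ε)) := by
        apply strictAntiOn_of_deriv_neg (convex_Icc _ _)
          (hφ.continuousOn.mono ((hIsub j).trans Set.Ioo_subset_Icc_self))
        intro t ht
        rw [interior_Icc] at ht
        have h := hIsign j t (Set.Ioo_subset_Icc_self ht)
        rw [← hd] at h
        nlinarith
      have hBc : ∀ᶠ δ in 𝓝[>] (0:ℝ), c δ ≤ B := by
        filter_upwards [hcI, hcinv, self_mem_nhdsWithin] with δ hcm hci (hδ : (0:ℝ) < δ)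
        by_contra h
        push_neg at h
        have := hanti hBIcc (Set.Ioo_subset_Icc_self hcm) h
        rw [hci, hφB] at this
        linarith
      refine ⟨c, ?_, ?_⟩
      · filter_upwards [hcI, hcinv, hBc, self_mem_nhdsWithin] with δ hcm hci hbc (hδ : (0:ℝ) < δ)
        refine ⟨?_, hcm⟩
        rw [Set.uIcc_of_ge hbc]
        ext t
        simp only [Set.mem_setOf_eq, Set.mem_Icc]
        constructor
        · rintro ⟨htI, h1, h2⟩
          have htIcc := Set.Ioo_subset_Icc_self htI
          constructor
          · by_contra h
            push_neg at h
            have := hanti htIcc (Set.Ioo_subset_Icc_self hcm) h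
            rw [hci] at this
            linarith
          · by_contra h
            push_neg at h
            have := hanti hBIcc htIcc h
            rw [hφB] at this
            linarith
        · rintro ⟨h1, h2⟩
          have htI : t ∈ Set.Ioo (B - ε) (B + ε) :=
            ⟨lt_of_lt_of_le hcm.1 h1, lt_of_le_of_lt h2 (by linarith)⟩
          have htIcc := Set.Ioo_subset_Icc_self htI
          refine ⟨htI, ?_, ?_⟩
          · rw [← hφB]
            exact hanti.antitoneOn htIcc hBIcc h2
          · rw [← hci]
            exact hanti.antitoneOn (Set.Ioo_subset_Icc_self hcm) htIcc h1
      · have habs : f B / ((|d| : ℝ) : ℂ) = -(d⁻¹ • f B) := by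
          rw [abs_of_neg hneg, Complex.real_smul, Complex.ofReal_inv, Complex.ofReal_neg]
          field_simp
        rw [habs]
        refine Tendsto.congr' ?_ hslope.neg
        filter_upwards [hBc] with δ hbc
        have heq : (∫ t in Set.uIcc B (c δ), f t) = -∫ t in B..(c δ), f t := by
          rw [Set.uIcc_of_ge hbc, MeasureTheory.integral_Icc_eq_integral_Ioc,
            ← intervalIntegral.integral_of_le hbc, intervalIntegral.integral_symm B (c δ)]
        rw [heq, smul_neg]
    · -- 0 < d : φ strictly increasing near B
      have hmono : StrictMonoOn φ (Set.Icc (B - ε) (B + ε)) := by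
        apply strictMonoOn_of_deriv_pos (convex_Icc _ _)
          (hφ.continuousOn.mono ((hIsub j).trans Set.Ioo_subset_Icc_self))
        intro t ht
        rw [interior_Icc] at ht
        have h := hIsign j t (Set.Ioo_subset_Icc_self ht)
        rw [← hd] at h
        nlinarith
      have hBc : ∀ᶠ δ in 𝓝[>] (0:ℝ), B ≤ c δ := by
        filter_upwards [hcI, hcinv, self_mem_nhdsWithin] with δ hcm hci (hδ : (0:ℝ) < δ)
        by_contra h
        push_neg at h
        have := hmono (Set.Ioo_subset_Icc_self hcm) hBIcc h
        rw [hci, hφB] at this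
        linarith
      refine ⟨c, ?_, ?_⟩
      · filter_upwards [hcI, hcinv, hBc, self_mem_nhdsWithin] with δ hcm hci hbc (hδ : (0:ℝ) < δ)
        refine ⟨?_, hcm⟩
        rw [Set.uIcc_of_le hbc]
        ext t
        simp only [Set.mem_setOf_eq, Set.mem_Icc]
        constructor
        · rintro ⟨htI, h1, h2⟩
          have htIcc := Set.Ioo_subset_Icc_self htI
          constructor
          · by_contra h
            push_neg at h
            have := hmono htIcc hBIcc h
            rw [hφB] at this
            linarith
          · by_contra h
            push_neg at h
            have := hmono (Set.Ioo_subset_Icc_self hcm) htIcc h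
            rw [hci] at this
            linarith
        · rintro ⟨h1, h2⟩
          have htI : t ∈ Set.Ioo (B - ε) (B + ε) :=
            ⟨lt_of_lt_of_le (by linarith) h1, lt_of_le_of_lt h2 hcm.2⟩
          have htIcc := Set.Ioo_subset_Icc_self htI
          refine ⟨htI, ?_, ?_⟩
          · rw [← hφB]
            exact hmono.monotoneOn hBIcc htIcc h1
          · rw [← hci]
            exact hmono.monotoneOn htIcc (Set.Ioo_subset_Icc_self hcm) h2
      · have habs : f B / ((|d| : ℝ) : ℂ) = d⁻¹ • f B := by
          rw [abs_of_pos hpos, Complex.real_smul, Complex.ofReal_inv, div_eq_inv_mul]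
        rw [habs]
        refine Tendsto.congr' ?_ hslope
        filter_upwards [hBc] with δ hbc
        rw [Set.uIcc_of_le hbc, MeasureTheory.integral_Icc_eq_integral_Ioc,
          ← intervalIntegral.integral_of_le hbc]
  choose c hcev hctend using main
  -- the sum of the local integrals is eventually 0
  have hsum : ∀ᶠ δ in 𝓝[>] (0:ℝ),
      (∑ j, ∫ t in Set.uIcc (b j) (c j δ), f t) = 0 := by
    filter_upwards [eventually_all.2 hcev, self_mem_nhdsWithin,
      eventually_nhdsWithin_of_eventually_nhds (eventually_lt_nhds hδ₀pos)]
      with δ hδall hδmem hδlt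
    have hδ : (0:ℝ) < δ := hδmem
    have hU : {t ∈ Set.Icc (0:ℝ) (2*π) | a ≤ φ t ∧ φ t ≤ a + δ}
        = ⋃ j, Set.uIcc (b j) (c j δ) := by
      ext t
      constructor
      · rintro ⟨htIcc, h1, h2⟩
        have hex : ∃ j, t ∈ Set.Ioo (b j - ε) (b j + ε) := by
          by_contra hno
          push_neg at hno
          have := hδ₀ t htIcc hno
          rw [abs_of_nonneg (by linarith)] at this
          linarith
        obtain ⟨j, htj⟩ := hex
        exact Set.mem_iUnion.2 ⟨j, by rw [← (hδall j).1]; exact ⟨htj, h1, h2⟩⟩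
      · intro ht
        obtain ⟨j, htj⟩ := Set.mem_iUnion.1 ht
        rw [← (hδall j).1] at htj
        exact ⟨Set.Ioo_subset_Icc_self (hIsub j (Set.Ioo_subset_Icc_self htj.1)), htj.2⟩
    have hmeas : ∀ j, MeasurableSet (Set.uIcc (b j) (c j δ)) := fun j => measurableSet_uIcc
    have huIccsub : ∀ j, Set.uIcc (b j) (c j δ) ⊆ Set.Icc (b j - ε) (b j + ε) := by
      intro j
      apply Set.OrdConnected.uIcc_subset Set.ordConnected_Icc
      · constructor <;> linarith
      · exact Set.Ioo_subset_Icc_self (hδall j).2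
    have hdisj' : Pairwise (Function.onFun Disjoint fun j => Set.uIcc (b j) (c j δ)) :=
      fun i j hij => (hdisj hij).mono (huIccsub i) (huIccsub j)
    have hintg : ∀ j, IntegrableOn f (Set.uIcc (b j) (c j δ)) volume := by
      intro j
      refine ContinuousOn.integrableOn_compact isCompact_uIcc (hfc.mono ?_)
      exact (huIccsub j).trans ((hIsub j).trans Set.Ioo_subset_Icc_self)
    rw [← MeasureTheory.integral_iUnion_fintype hmeas hdisj' hintg, ← hU]
    exact hint δ hδ.le
  have htendsum : Tendsto (fun δ : ℝ => ∑ j, δ⁻¹ • ∫ t in Set.uIcc (b j) (c j δ), f t)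
      (𝓝[>] (0:ℝ)) (𝓝 (∑ j, f (b j) / ((|deriv φ (b j)| : ℝ) : ℂ))) :=
    tendsto_finset_sum _ fun j _ => hctend j
  have hzero : Tendsto (fun δ : ℝ => ∑ j, δ⁻¹ • ∫ t in Set.uIcc (b j) (c j δ), f t)
      (𝓝[>] (0:ℝ)) (𝓝 0) := by
    apply Tendsto.congr' _ (tendsto_const_nhds : Tendsto (fun _ : ℝ => (0:ℂ)) (𝓝[>] (0:ℝ)) (𝓝 0))
    filter_upwards [hsum] with δ hδ
    rw [← Finset.smul_sum, hδ, smul_zero]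
  exact tendsto_nhds_unique htendsum hzero
end
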